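/- arXiv:1201.5035 — 5 statements merged into one kernel-verified Lean document; each statement's English description precedes it below -/
import Mathlib

section
/- Let G and H be locally compact Hausdorff topological groups acting freely and properly by automorphisms on the left and right, respectively, of a topological groupoid Γ, and suppose the two actions commute (t·(x·h) = (t·x)·h for all t ∈ G, x ∈ Γ, h ∈ H). Then the space Γ is an equivalence between the semidirect-product groupoid (Γ/H)⋊G and the semidirect-product groupoid H⋉(G\Γ). That is: (1) (Γ/H)⋊G acts freely and properly on the left of the space Γ by (xH, t)·y = x(t·y) whenever s(x) = r(t·y), with fibre map ρ(y) = (r(y)H, e); (2) H⋉(G\Γ) acts freely and properly on the right of the space Γ by y·(h, G·z) = (y·h)z whenever s(y·h) = r(z), with fibre map σ(y) = (e, G·s(y)); (3) these two actions commute; (4) ρ factors through a homeomorphism of the orbit space Γ/(H⋉(G\Γ)) onto (Γ⁰/H)×{e}; (5) σ factors through a homeomorphism of the orbit space ((Γ/H)⋊G)\Γ onto {e}×(G\Γ⁰). -/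
open MeasureTheory Filter Topology

/-- A topological groupoid: a space `Γ` with a set of units, continuous open range and
source maps onto the units, a (partially meaningful, totalized) continuous multiplication
defined for composable pairs, and a continuous inversion. -/
structure TopGroupoid (Γ : Type*) [TopologicalSpace Γ] where
  unit : Set Γ
  rng : Γ → Γ
  src : Γ → Γ
  mul : Γ → Γ → Γ
  inv : Γ → Γ
  rng_mem : ∀ x, rng x ∈ unit
  src_mem : ∀ x, src x ∈ unit
  rng_unit : ∀ u ∈ unit, rng u = u
  src_unit : ∀ u ∈ unit, src u = u
  continuous_rng : Continuous rng
  continuous_src : Continuous src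
  open_rng : ∀ U : Set Γ, IsOpen U → ∃ V : Set Γ, IsOpen V ∧ rng '' U = V ∩ unit
  open_src : ∀ U : Set Γ, IsOpen U → ∃ V : Set Γ, IsOpen V ∧ src '' U = V ∩ unit
  continuous_mul : ContinuousOn (fun p : Γ × Γ => mul p.1 p.2) {p : Γ × Γ | src p.1 = rng p.2}
  continuous_inv : Continuous inv
  rng_mul : ∀ x y, src x = rng y → rng (mul x y) = rng x
  src_mul : ∀ x y, src x = rng y → src (mul x y) = src y
  mul_assoc' : ∀ x y z, src x = rng y → src y = rng z → mul (mul x y) z = mul x (mul y z)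
  rng_mul_self : ∀ x, mul (rng x) x = x
  mul_src_self : ∀ x, mul x (src x) = x
  inv_inv' : ∀ x, inv (inv x) = x
  src_inv : ∀ x, src (inv x) = rng x
  rng_inv : ∀ x, rng (inv x) = src x
  inv_mul' : ∀ x, mul (inv x) x = src x
  mul_inv' : ∀ x, mul x (inv x) = rng x

section Actions

variable {Γ : Type*} [TopologicalSpace Γ]

/-- A (continuous) right action of a group `H` on a topological groupoid by automorphisms. -/
structure GroupRightAction (𝒢 : TopGroupoid Γ) (H : Type*) [TopologicalSpace H] [Group H] where
  act : Γ → H → Γ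
  continuous_act : Continuous fun p : Γ × H => act p.1 p.2
  act_one : ∀ x, act x 1 = x
  act_mul : ∀ x (h k : H), act (act x h) k = act x (h * k)
  unit_act : ∀ u ∈ 𝒢.unit, ∀ h : H, act u h ∈ 𝒢.unit
  src_act : ∀ x h, 𝒢.src (act x h) = act (𝒢.src x) h
  rng_act : ∀ x h, 𝒢.rng (act x h) = act (𝒢.rng x) h
  mul_act : ∀ x y h, 𝒢.src x = 𝒢.rng y → 𝒢.mul (act x h) (act y h) = act (𝒢.mul x y) h
  inv_act : ∀ x h, 𝒢.inv (act x h) = act (𝒢.inv x) h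

namespace GroupRightAction

variable {𝒢 : TopGroupoid Γ} {H : Type*} [TopologicalSpace H] [Group H]

/-- The action is free. -/
def Free (A : GroupRightAction 𝒢 H) : Prop := ∀ x h, A.act x h = x → h = 1

/-- The action is proper: `(x,h) ↦ (x·h, x)` has compact preimages of compact sets. -/
def Proper (A : GroupRightAction 𝒢 H) : Prop :=
  ∀ K : Set (Γ × Γ), IsCompact K → IsCompact {p : Γ × H | (A.act p.1 p.2, p.1) ∈ K}

/-- The orbit equivalence relation. -/
def setoid (A : GroupRightAction 𝒢 H) : Setoid Γ where
  r x y := ∃ h : H, A.act x h = y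
  iseqv := by
    refine ⟨fun x => ⟨1, A.act_one x⟩, ?_, ?_⟩
    · rintro x y ⟨h, rfl⟩
      exact ⟨h⁻¹, by rw [A.act_mul]; simp [A.act_one]⟩
    · rintro x y z ⟨h, rfl⟩ ⟨k, rfl⟩
      exact ⟨h * k, (A.act_mul x h k).symm⟩

end GroupRightAction

/-- A (continuous) left action of a group `G` on a topological groupoid by automorphisms. -/
structure GroupLeftAction (𝒢 : TopGroupoid Γ) (G : Type*) [TopologicalSpace G] [Group G] where
  act : G → Γ → Γ
  continuous_act : Continuous fun p : G × Γ => act p.1 p.2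
  one_act : ∀ x, act 1 x = x
  act_act : ∀ (t u : G) (x : Γ), act t (act u x) = act (t * u) x
  unit_act : ∀ u ∈ 𝒢.unit, ∀ t : G, act t u ∈ 𝒢.unit
  src_act : ∀ t x, 𝒢.src (act t x) = act t (𝒢.src x)
  rng_act : ∀ t x, 𝒢.rng (act t x) = act t (𝒢.rng x)
  mul_act : ∀ t x y, 𝒢.src x = 𝒢.rng y → 𝒢.mul (act t x) (act t y) = act t (𝒢.mul x y)
  inv_act : ∀ t x, 𝒢.inv (act t x) = act t (𝒢.inv x)

namespace GroupLeftAction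

variable {𝒢 : TopGroupoid Γ} {G : Type*} [TopologicalSpace G] [Group G]

/-- The action is free. -/
def Free (A : GroupLeftAction 𝒢 G) : Prop := ∀ t x, A.act t x = x → t = 1

/-- The action is proper: `(t,x) ↦ (t·x, x)` has compact preimages of compact sets. -/
def Proper (A : GroupLeftAction 𝒢 G) : Prop :=
  ∀ K : Set (Γ × Γ), IsCompact K → IsCompact {p : G × Γ | (A.act p.1 p.2, p.2) ∈ K}

/-- The orbit equivalence relation. -/
def setoid (A : GroupLeftAction 𝒢 G) : Setoid Γ where
  r x y := ∃ t : G, A.act t x = y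
  iseqv := by
    refine ⟨fun x => ⟨1, A.one_act x⟩, ?_, ?_⟩
    · rintro x y ⟨t, rfl⟩
      exact ⟨t⁻¹, by rw [A.act_act]; simp [A.one_act]⟩
    · rintro x y z ⟨t, rfl⟩ ⟨u, rfl⟩
      exact ⟨u * t, (A.act_act u t x).symm⟩

end GroupLeftAction

/-- A left action of a topological groupoid `𝒢` on a space `Ω`, with fibre map `ρ`. -/
structure GroupoidLeftAction (𝒢 : TopGroupoid Γ) (Ω : Type*) [TopologicalSpace Ω] where
  ρ : Ω → Γ
  act : Γ → Ω → Ω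
  ρ_mem : ∀ u, ρ u ∈ 𝒢.unit
  continuous_ρ : Continuous ρ
  ρ_surj : ∀ v ∈ 𝒢.unit, ∃ u, ρ u = v
  open_ρ : ∀ U : Set Ω, IsOpen U → ∃ V : Set Γ, IsOpen V ∧ ρ '' U = V ∩ 𝒢.unit
  continuous_act : ContinuousOn (fun p : Γ × Ω => act p.1 p.2) {p : Γ × Ω | 𝒢.src p.1 = ρ p.2}
  ρ_act : ∀ x u, 𝒢.src x = ρ u → ρ (act x u) = 𝒢.rng x
  unit_act : ∀ u, act (ρ u) u = u
  act_act : ∀ x y u, 𝒢.src y = ρ u → 𝒢.src x = 𝒢.rng y → act x (act y u) = act (𝒢.mul x y) u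

namespace GroupoidLeftAction

variable {𝒢 : TopGroupoid Γ} {Ω : Type*} [TopologicalSpace Ω]

/-- The action is free. -/
def Free (A : GroupoidLeftAction 𝒢 Ω) : Prop :=
  ∀ x u, 𝒢.src x = A.ρ u → A.act x u = u → x ∈ 𝒢.unit

/-- The action is proper: `(x,u) ↦ (x·u, u)` on the composable set has compact preimages of
compact sets. -/
def Proper (A : GroupoidLeftAction 𝒢 Ω) : Prop :=
  ∀ K : Set (Ω × Ω), IsCompact K →
    IsCompact {p : Γ × Ω | 𝒢.src p.1 = A.ρ p.2 ∧ (A.act p.1 p.2, p.2) ∈ K}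

/-- The orbit equivalence relation on `Ω`. -/
def setoid (A : GroupoidLeftAction 𝒢 Ω) : Setoid Ω where
  r u v := ∃ x, 𝒢.src x = A.ρ u ∧ A.act x u = v
  iseqv := by
    constructor
    · exact fun u => ⟨A.ρ u, 𝒢.src_unit _ (A.ρ_mem u), A.unit_act u⟩
    · rintro u v ⟨x, hx, rfl⟩
      refine ⟨𝒢.inv x, ?_, ?_⟩
      · rw [𝒢.src_inv, A.ρ_act x u hx]
      · rw [A.act_act _ x u hx (𝒢.src_inv x), 𝒢.inv_mul', hx, A.unit_act]
    · rintro u v w ⟨x, hx, rfl⟩ ⟨y, hy, rfl⟩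
      have hyr : 𝒢.src y = 𝒢.rng x := by rw [hy, A.ρ_act x u hx]
      refine ⟨𝒢.mul y x, ?_, ?_⟩
      · rw [𝒢.src_mul y x hyr, hx]
      · rw [← A.act_act y x u hx hyr]

end GroupoidLeftAction

/-- A right action of a topological groupoid `𝒢` on a space `Ω`, with fibre map `σ`. -/
structure GroupoidRightAction (𝒢 : TopGroupoid Γ) (Ω : Type*) [TopologicalSpace Ω] where
  σ : Ω → Γ
  act : Ω → Γ → Ω
  σ_mem : ∀ u, σ u ∈ 𝒢.unit
  continuous_σ : Continuous σ
  σ_surj : ∀ v ∈ 𝒢.unit, ∃ u, σ u = v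
  open_σ : ∀ U : Set Ω, IsOpen U → ∃ V : Set Γ, IsOpen V ∧ σ '' U = V ∩ 𝒢.unit
  continuous_act : ContinuousOn (fun p : Ω × Γ => act p.1 p.2) {p : Ω × Γ | σ p.1 = 𝒢.rng p.2}
  σ_act : ∀ u x, σ u = 𝒢.rng x → σ (act u x) = 𝒢.src x
  unit_act : ∀ u, act u (σ u) = u
  act_act : ∀ u x y, σ u = 𝒢.rng x → 𝒢.src x = 𝒢.rng y → act (act u x) y = act u (𝒢.mul x y)

namespace GroupoidRightAction

variable {𝒢 : TopGroupoid Γ} {Ω : Type*} [TopologicalSpace Ω]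

/-- The action is free. -/
def Free (A : GroupoidRightAction 𝒢 Ω) : Prop :=
  ∀ u x, A.σ u = 𝒢.rng x → A.act u x = u → x ∈ 𝒢.unit

/-- The action is proper. -/
def Proper (A : GroupoidRightAction 𝒢 Ω) : Prop :=
  ∀ K : Set (Ω × Ω), IsCompact K →
    IsCompact {p : Ω × Γ | A.σ p.1 = 𝒢.rng p.2 ∧ (A.act p.1 p.2, p.1) ∈ K}

/-- The orbit equivalence relation on `Ω`. -/
def setoid (A : GroupoidRightAction 𝒢 Ω) : Setoid Ω where
  r u v := ∃ x, A.σ u = 𝒢.rng x ∧ A.act u x = v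
  iseqv := by
    constructor
    · exact fun u => ⟨A.σ u, (𝒢.rng_unit _ (A.σ_mem u)).symm, A.unit_act u⟩
    · rintro u v ⟨x, hx, rfl⟩
      refine ⟨𝒢.inv x, ?_, ?_⟩
      · rw [𝒢.rng_inv, A.σ_act u x hx]
      · rw [A.act_act u x _ hx (𝒢.rng_inv x).symm, 𝒢.mul_inv', ← hx, A.unit_act]
    · rintro u v w ⟨x, hx, rfl⟩ ⟨y, hy, rfl⟩
      have hxy : 𝒢.src x = 𝒢.rng y := by rw [← A.σ_act u x hx, hy]
      refine ⟨𝒢.mul x y, ?_, ?_⟩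
      · rw [𝒢.rng_mul x y hxy, hx]
      · rw [A.act_act u x y hx hxy]

end GroupoidRightAction

end Actions

/-- A left Haar system on a topological groupoid: a family of Radon measures indexed by the
units, with support `r⁻¹(u)`, continuous in `u`, and left invariant. -/
def IsHaarSystem {Γ : Type*} [TopologicalSpace Γ] [MeasurableSpace Γ]
    (𝒢 : TopGroupoid Γ) (lam : Γ → Measure Γ) : Prop :=
  (∀ u ∈ 𝒢.unit, ∀ K : Set Γ, IsCompact K → lam u K < ⊤) ∧
  (∀ u ∈ 𝒢.unit, lam u {x | 𝒢.rng x ≠ u} = 0) ∧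
  (∀ u ∈ 𝒢.unit, ∀ V : Set Γ, IsOpen V → (V ∩ 𝒢.rng ⁻¹' {u}).Nonempty → 0 < lam u V) ∧
  (∀ f : Γ → ℝ, Continuous f → HasCompactSupport f →
    ContinuousOn (fun u => ∫ x, f x ∂(lam u)) 𝒢.unit) ∧
  (∀ x : Γ, ∀ f : Γ → ℝ, Continuous f → HasCompactSupport f →
    ∫ y, f (𝒢.mul x y) ∂(lam (𝒢.src x)) = ∫ y, f y ∂(lam (𝒢.rng x)))

section AuxLemmas

lemma continuousOn_of_comp_openMap {α β γ : Type*} [TopologicalSpace α] [TopologicalSpace β]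
    [TopologicalSpace γ] {Q : α → β} (hQo : IsOpenMap Q)
    (hQs : Function.Surjective Q) {f : β → γ} {S : Set β}
    (h : ContinuousOn (f ∘ Q) (Q ⁻¹' S)) : ContinuousOn f S := by
  rw [continuousOn_iff'] at h ⊢
  intro t ht
  obtain ⟨u, hu, huq⟩ := h t ht
  refine ⟨Q '' u, hQo u hu, ?_⟩
  ext b
  constructor
  · rintro ⟨hbt, hbS⟩
    obtain ⟨a, rfl⟩ := hQs b
    have : a ∈ u ∩ Q ⁻¹' S := by rw [← huq]; exact ⟨hbt, hbS⟩
    exact ⟨⟨a, this.1, rfl⟩, hbS⟩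
  · rintro ⟨⟨a, hau, rfl⟩, hbS⟩
    have : a ∈ (f ∘ Q) ⁻¹' t ∩ Q ⁻¹' S := by rw [huq]; exact ⟨hau, hbS⟩
    exact ⟨this.1, hbS⟩

lemma mapClusterPt_eq_of_tendsto {X Y : Type*} [TopologicalSpace X] [T2Space X] {l : Filter Y}
    {u : Y → X} {z y : X} (h : MapClusterPt z l u) (ht : Filter.Tendsto u l (𝓝 y)) : z = y :=
  eq_of_nhds_neBot (h.clusterPt.mono ht)

/-- Continuity of the "translation map" of a free and proper action-like map. -/
lemma translation_continuousOn {Γ X : Type*} [TopologicalSpace Γ] [T2Space Γ]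
    [LocallyCompactSpace Γ] [TopologicalSpace X]
    (e : Γ → X → Γ) (hec : Continuous fun p : Γ × X => e p.1 p.2)
    (hinj : ∀ u x x', e u x = e u x' → x = x')
    (hprop : ∀ K : Set (Γ × Γ), IsCompact K → IsCompact {p : Γ × X | (e p.1 p.2, p.1) ∈ K})
    (τ : Γ → Γ → X) (hτ : ∀ u v, (∃ x, e u x = v) → e u (τ u v) = v) :
    ContinuousOn (fun p : Γ × Γ => τ p.1 p.2) {p : Γ × Γ | ∃ x, e p.1 x = p.2} := by
  set D := {p : Γ × Γ | ∃ x, e p.1 x = p.2} with hD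
  intro p hp
  obtain ⟨K, hKc, hKn⟩ := exists_compact_mem_nhds (p.2, p.1)
  have hLc := hprop K hKc
  haveI : (𝓝[D] p).NeBot := mem_closure_iff_nhdsWithin_neBot.mp (subset_closure hp)
  have hevD : ∀ᶠ q in 𝓝[D] p, q ∈ D := self_mem_nhdsWithin
  have heq : ∀ᶠ q in 𝓝[D] p, e q.1 (τ q.1 q.2) = q.2 := by
    filter_upwards [hevD] with q hq
    exact hτ q.1 q.2 hq
  have hswap : Filter.Tendsto (fun q : Γ × Γ => (q.2, q.1)) (𝓝[D] p) (𝓝 (p.2, p.1)) :=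
    ((continuous_snd.prodMk continuous_fst).tendsto p).mono_left nhdsWithin_le_nhds
  have hmem : ∀ᶠ q in 𝓝[D] p, (q.1, τ q.1 q.2) ∈ {r : Γ × X | (e r.1 r.2, r.1) ∈ K} := by
    filter_upwards [heq, hswap.eventually_mem hKn] with q h1 h2
    simpa [h1] using h2
  have key : Filter.Tendsto (fun q : Γ × Γ => (q.1, τ q.1 q.2)) (𝓝[D] p)
      (𝓝 (p.1, τ p.1 p.2)) := by
    refine hLc.tendsto_nhds_of_unique_mapClusterPt hmem ?_
    rintro ⟨z1, z2⟩ _ hcl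
    have hfst : Filter.Tendsto (fun q : Γ × Γ => q.1) (𝓝[D] p) (𝓝 p.1) :=
      (continuous_fst.tendsto p).mono_left nhdsWithin_le_nhds
    have hsnd : Filter.Tendsto (fun q : Γ × Γ => q.2) (𝓝[D] p) (𝓝 p.2) :=
      (continuous_snd.tendsto p).mono_left nhdsWithin_le_nhds
    have h1 : MapClusterPt z1 (𝓝[D] p) (fun q : Γ × Γ => q.1) := by
      have := hcl.continuousAt_comp (f := Prod.fst) continuousAt_fst
      exact this
    have hz1 : z1 = p.1 := mapClusterPt_eq_of_tendsto h1 hfst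
    have h2 : MapClusterPt (e z1 z2) (𝓝[D] p)
        ((fun r : Γ × X => e r.1 r.2) ∘ (fun q : Γ × Γ => (q.1, τ q.1 q.2))) :=
      hcl.continuousAt_comp hec.continuousAt
    have h3 : MapClusterPt (e z1 z2) (𝓝[D] p) (fun q : Γ × Γ => q.2) := by
      rw [MapClusterPt] at h2 ⊢
      rwa [Filter.map_congr
        (by filter_upwards [heq] with q hq; simpa [Function.comp] using hq)] at h2
    have hz2 : e z1 z2 = p.2 := mapClusterPt_eq_of_tendsto h3 hsnd
    have hw : e p.1 z2 = p.2 := by rw [← hz1]; exact hz2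
    exact Prod.ext hz1 (hinj p.1 z2 _ (hw.trans (hτ p.1 p.2 ⟨z2, hw⟩).symm))
  exact (continuous_snd.tendsto _).comp key

lemma TopGroupoid.inv_unit {Γ : Type*} [TopologicalSpace Γ] (𝒢 : TopGroupoid Γ) {u : Γ}
    (hu : u ∈ 𝒢.unit) : 𝒢.inv u = u := by
  have h1 : 𝒢.rng (𝒢.inv u) = u := by rw [𝒢.rng_inv, 𝒢.src_unit u hu]
  calc 𝒢.inv u = 𝒢.mul (𝒢.rng (𝒢.inv u)) (𝒢.inv u) := (𝒢.rng_mul_self _).symm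
    _ = 𝒢.mul u (𝒢.inv u) := by rw [h1]
    _ = 𝒢.rng u := 𝒢.mul_inv' u
    _ = u := 𝒢.rng_unit u hu

lemma TopGroupoid.cancel_right {Γ : Type*} [TopologicalSpace Γ] (𝒢 : TopGroupoid Γ) {a c : Γ}
    (h : 𝒢.src a = 𝒢.rng c) : 𝒢.mul (𝒢.mul a c) (𝒢.inv c) = a := by
  rw [𝒢.mul_assoc' a c (𝒢.inv c) h (𝒢.rng_inv c).symm, 𝒢.mul_inv', ← h, 𝒢.mul_src_self]

lemma TopGroupoid.cancel_left {Γ : Type*} [TopologicalSpace Γ] (𝒢 : TopGroupoid Γ) {a c : Γ}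
    (h : 𝒢.src a = 𝒢.rng c) : 𝒢.mul (𝒢.inv a) (𝒢.mul a c) = c := by
  rw [← 𝒢.mul_assoc' (𝒢.inv a) a c (𝒢.src_inv a) h, 𝒢.inv_mul', h, 𝒢.rng_mul_self]

open Classical in
noncomputable def actLdef {Γ G H : Type*} [TopologicalSpace Γ] [TopologicalSpace G] [Group G]
    [TopologicalSpace H] [Group H] (𝒢 : TopGroupoid Γ) (LA : GroupLeftAction 𝒢 G)
    (RA : GroupRightAction 𝒢 H) : Quotient RA.setoid × G → Γ → Γ := fun p y =>
  if hx : ∃ x, Quotient.mk RA.setoid x = p.1 ∧ 𝒢.src x = 𝒢.rng (LA.act p.2 y)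
  then 𝒢.mul hx.choose (LA.act p.2 y) else y

open Classical in
noncomputable def actRdef {Γ G H : Type*} [TopologicalSpace Γ] [TopologicalSpace G] [Group G]
    [TopologicalSpace H] [Group H] (𝒢 : TopGroupoid Γ) (LA : GroupLeftAction 𝒢 G)
    (RA : GroupRightAction 𝒢 H) : Γ → H × Quotient LA.setoid → Γ := fun y p =>
  if hz : ∃ z, Quotient.mk LA.setoid z = p.2 ∧ 𝒢.src (RA.act y p.1) = 𝒢.rng z
  then 𝒢.mul (RA.act y p.1) hz.choose else y

end AuxLemmas

/-- (Groupoid equivalence.) For commuting free and proper actions of `G`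
(left) and `H` (right) by automorphisms on a groupoid `Γ`, the space `Γ` is a
`((Γ/H)⋊G)-(H⋉(G\Γ))` equivalence: the two semidirect-product groupoids act freely and
properly on the left and right of `Γ`, the actions commute, and the fibre maps factor
through homeomorphisms of the respective orbit spaces onto `(Γ⁰/H)×{e}` and
`{e}×(G\Γ⁰)`. -/
theorem symmetric_groupoid_equivalence
    {Γ G H : Type*} [TopologicalSpace Γ] [T2Space Γ] [LocallyCompactSpace Γ]
    [TopologicalSpace G] [Group G] [IsTopologicalGroup G] [T2Space G] [LocallyCompactSpace G]
    [TopologicalSpace H] [Group H] [IsTopologicalGroup H] [T2Space H] [LocallyCompactSpace H]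
    (𝒢 : TopGroupoid Γ)
    (LA : GroupLeftAction 𝒢 G) (RA : GroupRightAction 𝒢 H)
    (hLfree : LA.Free) (hLproper : LA.Proper)
    (hRfree : RA.Free) (hRproper : RA.Proper)
    (hcomm : ∀ (t : G) (x : Γ) (h : H), LA.act t (RA.act x h) = RA.act (LA.act t x) h)
    -- the quotient groupoid Γ/H
    (QH : TopGroupoid (Quotient RA.setoid))
    (hQHunit : QH.unit = Quotient.mk RA.setoid '' 𝒢.unit)
    (hQHrng : ∀ x : Γ, QH.rng (Quotient.mk RA.setoid x) = Quotient.mk RA.setoid (𝒢.rng x))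
    (hQHsrc : ∀ x : Γ, QH.src (Quotient.mk RA.setoid x) = Quotient.mk RA.setoid (𝒢.src x))
    (hQHmul : ∀ x y : Γ, 𝒢.src x = 𝒢.rng y →
      QH.mul (Quotient.mk RA.setoid x) (Quotient.mk RA.setoid y)
        = Quotient.mk RA.setoid (𝒢.mul x y))
    (hQHinv : ∀ x : Γ, QH.inv (Quotient.mk RA.setoid x) = Quotient.mk RA.setoid (𝒢.inv x))
    -- the quotient groupoid G\Γ
    (QG : TopGroupoid (Quotient LA.setoid))
    (hQGunit : QG.unit = Quotient.mk LA.setoid '' 𝒢.unit)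
    (hQGrng : ∀ x : Γ, QG.rng (Quotient.mk LA.setoid x) = Quotient.mk LA.setoid (𝒢.rng x))
    (hQGsrc : ∀ x : Γ, QG.src (Quotient.mk LA.setoid x) = Quotient.mk LA.setoid (𝒢.src x))
    (hQGmul : ∀ x y : Γ, 𝒢.src x = 𝒢.rng y →
      QG.mul (Quotient.mk LA.setoid x) (Quotient.mk LA.setoid y)
        = Quotient.mk LA.setoid (𝒢.mul x y))
    (hQGinv : ∀ x : Γ, QG.inv (Quotient.mk LA.setoid x) = Quotient.mk LA.setoid (𝒢.inv x))
    -- the semidirect-product groupoid (Γ/H)⋊G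
    (SP1 : TopGroupoid (Quotient RA.setoid × G))
    (hSP1unit : SP1.unit = (Quotient.mk RA.setoid '' 𝒢.unit) ×ˢ ({1} : Set G))
    (hSP1rng : ∀ (x : Γ) (t : G),
      SP1.rng (Quotient.mk RA.setoid x, t) = (Quotient.mk RA.setoid (𝒢.rng x), 1))
    (hSP1src : ∀ (x : Γ) (t : G),
      SP1.src (Quotient.mk RA.setoid x, t) = (Quotient.mk RA.setoid (LA.act t⁻¹ (𝒢.src x)), 1))
    (hSP1mul : ∀ (x y : Γ) (s t : G), 𝒢.src x = 𝒢.rng (LA.act s y) →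
      SP1.mul (Quotient.mk RA.setoid x, s) (Quotient.mk RA.setoid y, t)
        = (Quotient.mk RA.setoid (𝒢.mul x (LA.act s y)), s * t))
    (hSP1inv : ∀ (x : Γ) (t : G),
      SP1.inv (Quotient.mk RA.setoid x, t)
        = (Quotient.mk RA.setoid (LA.act t⁻¹ (𝒢.inv x)), t⁻¹))
    -- the semidirect-product groupoid H⋉(G\Γ)
    (SP2 : TopGroupoid (H × Quotient LA.setoid))
    (hSP2unit : SP2.unit = ({1} : Set H) ×ˢ (Quotient.mk LA.setoid '' 𝒢.unit))
    (hSP2rng : ∀ (h : H) (x : Γ),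
      SP2.rng (h, Quotient.mk LA.setoid x)
        = (1, Quotient.mk LA.setoid (RA.act (𝒢.rng x) h⁻¹)))
    (hSP2src : ∀ (h : H) (x : Γ),
      SP2.src (h, Quotient.mk LA.setoid x) = (1, Quotient.mk LA.setoid (𝒢.src x)))
    (hSP2mul : ∀ (s t : H) (x y : Γ), 𝒢.src (RA.act x t) = 𝒢.rng y →
      SP2.mul (s, Quotient.mk LA.setoid x) (t, Quotient.mk LA.setoid y)
        = (s * t, Quotient.mk LA.setoid (𝒢.mul (RA.act x t) y)))
    (hSP2inv : ∀ (h : H) (x : Γ),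
      SP2.inv (h, Quotient.mk LA.setoid x)
        = (h⁻¹, Quotient.mk LA.setoid (RA.act (𝒢.inv x) h⁻¹))) :
    ∃ (LAct : GroupoidLeftAction SP1 Γ) (RAct : GroupoidRightAction SP2 Γ),
      -- (1) the left action of (Γ/H)⋊G
      (∀ y : Γ, LAct.ρ y = (Quotient.mk RA.setoid (𝒢.rng y), 1)) ∧
      (∀ (x : Γ) (t : G) (y : Γ), 𝒢.src x = 𝒢.rng (LA.act t y) →
        LAct.act (Quotient.mk RA.setoid x, t) y = 𝒢.mul x (LA.act t y)) ∧
      LAct.Free ∧ LAct.Proper ∧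
      -- (2) the right action of H⋉(G\Γ)
      (∀ y : Γ, RAct.σ y = (1, Quotient.mk LA.setoid (𝒢.src y))) ∧
      (∀ (y : Γ) (h : H) (z : Γ), 𝒢.src (RA.act y h) = 𝒢.rng z →
        RAct.act y (h, Quotient.mk LA.setoid z) = 𝒢.mul (RA.act y h) z) ∧
      RAct.Free ∧ RAct.Proper ∧
      -- (3) the two actions commute
      (∀ (x : Γ) (t : G) (y : Γ) (h : H) (z : Γ),
        𝒢.src x = 𝒢.rng (LA.act t y) → 𝒢.src (RA.act y h) = 𝒢.rng z →
        RAct.act (LAct.act (Quotient.mk RA.setoid x, t) y) (h, Quotient.mk LA.setoid z)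
          = LAct.act (Quotient.mk RA.setoid x, t)
              (RAct.act y (h, Quotient.mk LA.setoid z))) ∧
      -- (4) ρ factors through a homeomorphism Γ/(H⋉(G\Γ)) ≅ (Γ⁰/H)×{e}
      (∃ φ : Quotient RAct.setoid ≃ₜ
          {p : Quotient RA.setoid × G // p.1 ∈ Quotient.mk RA.setoid '' 𝒢.unit ∧ p.2 = 1},
        ∀ y : Γ, (φ (Quotient.mk RAct.setoid y)).val
          = (Quotient.mk RA.setoid (𝒢.rng y), 1)) ∧
      -- (5) σ factors through a homeomorphism ((Γ/H)⋊G)\Γ ≅ {e}×(G\Γ⁰)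
      (∃ ψ : Quotient LAct.setoid ≃ₜ
          {p : H × Quotient LA.setoid // p.1 = 1 ∧ p.2 ∈ Quotient.mk LA.setoid '' 𝒢.unit},
        ∀ y : Γ, (ψ (Quotient.mk LAct.setoid y)).val
          = (1, Quotient.mk LA.setoid (𝒢.src y))) := by
    classical
  -- quotient map basics
  have qHact : ∀ (x : Γ) (k : H), Quotient.mk RA.setoid (RA.act x k) = Quotient.mk RA.setoid x :=
    fun x k => Quotient.sound ⟨k⁻¹, by rw [RA.act_mul]; simp [RA.act_one]⟩
  have qGact : ∀ (t : G) (x : Γ), Quotient.mk LA.setoid (LA.act t x) = Quotient.mk LA.setoid x :=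
    fun t x => Quotient.sound ⟨t⁻¹, by rw [LA.act_act]; simp [LA.one_act]⟩
  have qHexact : ∀ {x y : Γ}, Quotient.mk RA.setoid x = Quotient.mk RA.setoid y →
      ∃ k : H, RA.act x k = y := fun h => Quotient.exact h
  have qGexact : ∀ {x y : Γ}, Quotient.mk LA.setoid x = Quotient.mk LA.setoid y →
      ∃ t : G, LA.act t x = y := fun h => Quotient.exact h
  have contqH : Continuous (Quotient.mk RA.setoid) := continuous_quot_mk
  have contqG : Continuous (Quotient.mk LA.setoid) := continuous_quot_mk
  have Lcancel : ∀ (t : G) (x : Γ), LA.act t (LA.act t⁻¹ x) = x := fun t x => by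
    rw [LA.act_act]; simp [LA.one_act]
  have Lcancel' : ∀ (t : G) (x : Γ), LA.act t⁻¹ (LA.act t x) = x := fun t x => by
    rw [LA.act_act]; simp [LA.one_act]
  have Rcancel : ∀ (x : Γ) (k : H), RA.act (RA.act x k) k⁻¹ = x := fun x k => by
    rw [RA.act_mul]; simp [RA.act_one]
  have openqH : IsOpenMap (Quotient.mk RA.setoid) := by
    intro U hU
    refine isQuotientMap_quot_mk.isOpen_preimage.mp ?_
    have hsat : Quotient.mk RA.setoid ⁻¹' (Quotient.mk RA.setoid '' U)
        = ⋃ k : H, (fun x => RA.act x k) ⁻¹' U := by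
      ext x
      simp only [Set.mem_preimage, Set.mem_image, Set.mem_iUnion]
      constructor
      · rintro ⟨u, hu, he⟩
        obtain ⟨k, hk⟩ := qHexact he
        exact ⟨k⁻¹, by rw [← hk, Rcancel]; exact hu⟩
      · rintro ⟨k, hk⟩
        exact ⟨RA.act x k, hk, qHact x k⟩
    change IsOpen (Quotient.mk RA.setoid ⁻¹' (Quotient.mk RA.setoid '' U))
    rw [hsat]
    exact isOpen_iUnion fun k =>
      hU.preimage (RA.continuous_act.comp (continuous_id.prodMk continuous_const))
  have openqG : IsOpenMap (Quotient.mk LA.setoid) := by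
    intro U hU
    refine isQuotientMap_quot_mk.isOpen_preimage.mp ?_
    have hsat : Quotient.mk LA.setoid ⁻¹' (Quotient.mk LA.setoid '' U)
        = ⋃ t : G, (fun x => LA.act t x) ⁻¹' U := by
      ext x
      simp only [Set.mem_preimage, Set.mem_image, Set.mem_iUnion]
      constructor
      · rintro ⟨u, hu, he⟩
        obtain ⟨t, ht⟩ := qGexact he
        exact ⟨t⁻¹, by rw [← ht, Lcancel']; exact hu⟩
      · rintro ⟨t, ht⟩
        exact ⟨LA.act t x, ht, qGact t x⟩
    change IsOpen (Quotient.mk LA.setoid ⁻¹' (Quotient.mk LA.setoid '' U))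
    rw [hsat]
    exact isOpen_iUnion fun t =>
      hU.preimage (LA.continuous_act.comp (continuous_const.prodMk continuous_id))
  have hUnitH : ∀ V : Set Γ, (Quotient.mk RA.setoid '' V) ∩ (Quotient.mk RA.setoid '' 𝒢.unit)
      = Quotient.mk RA.setoid '' (V ∩ 𝒢.unit) := by
    intro V
    ext c
    constructor
    · rintro ⟨⟨x, hxV, rfl⟩, ⟨u, hu, he⟩⟩
      obtain ⟨k, hk⟩ := qHexact he
      exact ⟨x, ⟨hxV, by rw [← hk]; exact RA.unit_act u hu k⟩, rfl⟩
    · rintro ⟨x, ⟨h1, h2⟩, rfl⟩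
      exact ⟨⟨x, h1, rfl⟩, ⟨x, h2, rfl⟩⟩
  have hUnitG : ∀ V : Set Γ, (Quotient.mk LA.setoid '' V) ∩ (Quotient.mk LA.setoid '' 𝒢.unit)
      = Quotient.mk LA.setoid '' (V ∩ 𝒢.unit) := by
    intro V
    ext c
    constructor
    · rintro ⟨⟨x, hxV, rfl⟩, ⟨u, hu, he⟩⟩
      obtain ⟨t, ht⟩ := qGexact he
      exact ⟨x, ⟨hxV, by rw [← ht]; exact LA.unit_act u hu t⟩, rfl⟩
    · rintro ⟨x, ⟨h1, h2⟩, rfl⟩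
      exact ⟨⟨x, h1, rfl⟩, ⟨x, h2, rfl⟩⟩
  -- spec lemmas for the action maps
  have specL : ∀ (x : Γ) (t : G) (y : Γ), 𝒢.src x = 𝒢.rng (LA.act t y) →
      actLdef 𝒢 LA RA (Quotient.mk RA.setoid x, t) y = 𝒢.mul x (LA.act t y) := by
    intro x t y hxy
    have hex : ∃ x', Quotient.mk RA.setoid x' = Quotient.mk RA.setoid x ∧
        𝒢.src x' = 𝒢.rng (LA.act t y) := ⟨x, rfl, hxy⟩
    simp only [actLdef]
    rw [dif_pos hex]
    obtain ⟨h1, h2⟩ := hex.choose_spec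
    obtain ⟨k, hk⟩ := qHexact h1
    have hfix : RA.act (𝒢.rng (LA.act t y)) k = 𝒢.rng (LA.act t y) := by
      calc RA.act (𝒢.rng (LA.act t y)) k = RA.act (𝒢.src hex.choose) k := by rw [h2]
        _ = 𝒢.src (RA.act hex.choose k) := (RA.src_act _ _).symm
        _ = 𝒢.src x := by rw [hk]
        _ = 𝒢.rng (LA.act t y) := hxy
    have hk1 : k = 1 := hRfree _ _ hfix
    rw [hk1, RA.act_one] at hk
    exact congrArg (fun w => 𝒢.mul w (LA.act t y)) hk
  have specR : ∀ (y : Γ) (h : H) (z : Γ), 𝒢.src (RA.act y h) = 𝒢.rng z →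
      actRdef 𝒢 LA RA y (h, Quotient.mk LA.setoid z) = 𝒢.mul (RA.act y h) z := by
    intro y h z hz
    have hex : ∃ z', Quotient.mk LA.setoid z' = Quotient.mk LA.setoid z ∧
        𝒢.src (RA.act y h) = 𝒢.rng z' := ⟨z, rfl, hz⟩
    simp only [actRdef]
    rw [dif_pos hex]
    obtain ⟨h1, h2⟩ := hex.choose_spec
    obtain ⟨t, ht⟩ := qGexact h1
    have hrr : 𝒢.rng hex.choose = 𝒢.rng z := h2.symm.trans hz
    have hfix : LA.act t (𝒢.rng z) = 𝒢.rng z := by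
      calc LA.act t (𝒢.rng z) = LA.act t (𝒢.rng hex.choose) := by rw [hrr]
        _ = 𝒢.rng (LA.act t hex.choose) := (LA.rng_act _ _).symm
        _ = 𝒢.rng z := by rw [ht]
    have ht1 : t = 1 := hLfree _ _ hfix
    rw [ht1, LA.one_act] at ht
    exact congrArg (fun w => 𝒢.mul (RA.act y h) w) ht
  -- composability criteria
  have compL : ∀ (c : Quotient RA.setoid) (t : G) (y : Γ),
      SP1.src (c, t) = (Quotient.mk RA.setoid (𝒢.rng y), 1) →
      ∃ x, Quotient.mk RA.setoid x = c ∧ 𝒢.src x = 𝒢.rng (LA.act t y) := by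
    intro c t y hc
    obtain ⟨x₀, rfl⟩ := Quotient.exists_rep c
    rw [hSP1src] at hc
    have h1 : Quotient.mk RA.setoid (LA.act t⁻¹ (𝒢.src x₀)) = Quotient.mk RA.setoid (𝒢.rng y) :=
      congrArg Prod.fst hc
    obtain ⟨k, hk⟩ := qHexact h1
    refine ⟨RA.act x₀ k, qHact x₀ k, ?_⟩
    rw [RA.src_act]
    have h2 := congrArg (LA.act t) hk
    rw [hcomm, Lcancel] at h2
    rw [h2, ← LA.rng_act]
  have compR : ∀ (y : Γ) (h : H) (d : Quotient LA.setoid),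
      ((1 : H), Quotient.mk LA.setoid (𝒢.src y)) = SP2.rng (h, d) →
      ∃ z, Quotient.mk LA.setoid z = d ∧ 𝒢.src (RA.act y h) = 𝒢.rng z := by
    intro y h d hc
    obtain ⟨z₀, rfl⟩ := Quotient.exists_rep d
    rw [hSP2rng] at hc
    have h1 : Quotient.mk LA.setoid (𝒢.src y) = Quotient.mk LA.setoid (RA.act (𝒢.rng z₀) h⁻¹) :=
      congrArg Prod.snd hc
    obtain ⟨t, ht⟩ := qGexact h1
    refine ⟨LA.act t⁻¹ z₀, qGact _ _, ?_⟩
    rw [RA.src_act, LA.rng_act]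
    have h2 : 𝒢.rng z₀ = RA.act (LA.act t (𝒢.src y)) h := by
      rw [ht, RA.act_mul]; simp [RA.act_one]
    rw [h2, hcomm, Lcancel']
  -- LAct fields
  have hLρmem : ∀ y : Γ, (Quotient.mk RA.setoid (𝒢.rng y), (1 : G)) ∈ SP1.unit := by
    intro y; rw [hSP1unit]; exact ⟨⟨𝒢.rng y, 𝒢.rng_mem y, rfl⟩, rfl⟩
  have hLcontρ : Continuous (fun y : Γ => (Quotient.mk RA.setoid (𝒢.rng y), (1 : G))) :=
    (contqH.comp 𝒢.continuous_rng).prodMk continuous_const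
  have hLρsurj : ∀ v ∈ SP1.unit, ∃ y : Γ, (Quotient.mk RA.setoid (𝒢.rng y), (1 : G)) = v := by
    intro v hv
    rw [hSP1unit] at hv
    obtain ⟨v1, v2⟩ := v
    obtain ⟨⟨u, hu, h1⟩, h2⟩ := hv
    refine ⟨u, ?_⟩
    have h2' : v2 = 1 := h2
    rw [𝒢.rng_unit u hu, h1, h2']
  have hLopenρ : ∀ U : Set Γ, IsOpen U → ∃ V : Set (Quotient RA.setoid × G), IsOpen V ∧
      (fun y : Γ => (Quotient.mk RA.setoid (𝒢.rng y), (1 : G))) '' U = V ∩ SP1.unit := by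
    intro U hU
    obtain ⟨V₀, hV₀, hV₀eq⟩ := 𝒢.open_rng U hU
    refine ⟨(Quotient.mk RA.setoid '' V₀) ×ˢ (Set.univ : Set G),
      (openqH V₀ hV₀).prod isOpen_univ, ?_⟩
    rw [hSP1unit]
    ext ⟨c, t⟩
    constructor
    · rintro ⟨y, hy, heq⟩
      obtain ⟨rfl, rfl⟩ : Quotient.mk RA.setoid (𝒢.rng y) = c ∧ (1 : G) = t :=
        Prod.mk.injEq .. ▸ heq
      have hry : 𝒢.rng y ∈ V₀ ∩ 𝒢.unit := by rw [← hV₀eq]; exact ⟨y, hy, rfl⟩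
      exact ⟨⟨⟨𝒢.rng y, hry.1, rfl⟩, trivial⟩, ⟨𝒢.rng y, hry.2, rfl⟩, rfl⟩
    · rintro ⟨⟨hc1, -⟩, hc2, ht⟩
      have hc : c ∈ Quotient.mk RA.setoid '' (V₀ ∩ 𝒢.unit) := by
        rw [← hUnitH V₀]; exact ⟨hc1, hc2⟩
      obtain ⟨x, hx, rfl⟩ := hc
      have hx' : x ∈ 𝒢.rng '' U := by rw [hV₀eq]; exact hx
      obtain ⟨y, hy, hxy⟩ := hx'
      have ht1 : t = 1 := ht
      exact ⟨y, hy, by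
        show (Quotient.mk RA.setoid (𝒢.rng y), (1 : G)) = (Quotient.mk RA.setoid x, t)
        rw [hxy, ht1]⟩
  have hLρact : ∀ (p : Quotient RA.setoid × G) (z : Γ),
      SP1.src p = (Quotient.mk RA.setoid (𝒢.rng z), (1 : G)) →
      (Quotient.mk RA.setoid (𝒢.rng (actLdef 𝒢 LA RA p z)), (1 : G)) = SP1.rng p := by
    intro p z hp
    obtain ⟨c, t⟩ := p
    obtain ⟨x, rfl, hx2⟩ := compL c t z hp
    rw [specL x t z hx2, hSP1rng]
    have hr : 𝒢.rng (𝒢.mul x (LA.act t z)) = 𝒢.rng x := 𝒢.rng_mul _ _ hx2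
    rw [hr]
  have hLunitact : ∀ z : Γ, actLdef 𝒢 LA RA (Quotient.mk RA.setoid (𝒢.rng z), (1 : G)) z = z := by
    intro z
    have h1 : 𝒢.src (𝒢.rng z) = 𝒢.rng (LA.act 1 z) := by
      rw [LA.one_act, 𝒢.src_unit _ (𝒢.rng_mem z)]
    rw [specL _ _ _ h1, LA.one_act, 𝒢.rng_mul_self]
  have hLactact : ∀ (p q : Quotient RA.setoid × G) (z : Γ),
      SP1.src q = (Quotient.mk RA.setoid (𝒢.rng z), (1 : G)) → SP1.src p = SP1.rng q →
      actLdef 𝒢 LA RA p (actLdef 𝒢 LA RA q z) = actLdef 𝒢 LA RA (SP1.mul p q) z := by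
    intro p q z h1 h2
    obtain ⟨c1, s⟩ := p
    obtain ⟨c2, t⟩ := q
    obtain ⟨y, rfl, hy⟩ := compL c2 t z h1
    rw [hSP1rng] at h2
    obtain ⟨x, rfl, hx⟩ := compL c1 s y h2
    rw [specL y t z hy]
    have hsrc_sy : 𝒢.src (LA.act s y) = 𝒢.rng (LA.act s (LA.act t z)) := by
      rw [LA.src_act, hy, LA.rng_act s (LA.act t z)]
    have hmulact : LA.act s (𝒢.mul y (LA.act t z))
        = 𝒢.mul (LA.act s y) (LA.act s (LA.act t z)) := (LA.mul_act s y (LA.act t z) hy).symm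
    have hx' : 𝒢.src x = 𝒢.rng (LA.act s (𝒢.mul y (LA.act t z))) := by
      rw [hmulact, 𝒢.rng_mul _ _ hsrc_sy]; exact hx
    rw [specL x s _ hx']
    rw [hSP1mul x y s t hx]
    have hsrcmul : 𝒢.src (𝒢.mul x (LA.act s y)) = 𝒢.rng (LA.act (s * t) z) := by
      rw [𝒢.src_mul _ _ hx, LA.src_act, hy, ← LA.act_act, LA.rng_act s (LA.act t z)]
    rw [specL _ (s * t) z hsrcmul]
    have hfin : 𝒢.src (LA.act s y) = 𝒢.rng (LA.act (s * t) z) := by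
      rw [← LA.act_act]; exact hsrc_sy
    rw [hmulact, LA.act_act, ← 𝒢.mul_assoc' x (LA.act s y) (LA.act (s * t) z) hx hfin]
  have hLFree : ∀ (p : Quotient RA.setoid × G) (z : Γ),
      SP1.src p = (Quotient.mk RA.setoid (𝒢.rng z), (1 : G)) →
      actLdef 𝒢 LA RA p z = z → p ∈ SP1.unit := by
    intro p z hp hact
    obtain ⟨c, t⟩ := p
    obtain ⟨x, rfl, hx⟩ := compL c t z hp
    rw [specL x t z hx] at hact
    have hsrc : LA.act t (𝒢.src z) = 𝒢.src z := by
      conv_rhs => rw [← hact, 𝒢.src_mul _ _ hx, LA.src_act]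
    have ht1 : t = 1 := hLfree t (𝒢.src z) hsrc
    subst ht1
    rw [LA.one_act] at hact hx
    have hxval : x = 𝒢.rng z := by
      have hcr := 𝒢.cancel_right hx
      rw [hact, 𝒢.mul_inv'] at hcr
      exact hcr.symm
    rw [hSP1unit]
    exact ⟨⟨𝒢.rng z, 𝒢.rng_mem z, by rw [hxval]⟩, rfl⟩
  -- RAct fields
  have hRσmem : ∀ y : Γ, ((1 : H), Quotient.mk LA.setoid (𝒢.src y)) ∈ SP2.unit := by
    intro y; rw [hSP2unit]; exact ⟨rfl, ⟨𝒢.src y, 𝒢.src_mem y, rfl⟩⟩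
  have hRcontσ : Continuous (fun y : Γ => ((1 : H), Quotient.mk LA.setoid (𝒢.src y))) :=
    continuous_const.prodMk (contqG.comp 𝒢.continuous_src)
  have hRσsurj : ∀ v ∈ SP2.unit, ∃ y : Γ, ((1 : H), Quotient.mk LA.setoid (𝒢.src y)) = v := by
    intro v hv
    rw [hSP2unit] at hv
    obtain ⟨v1, v2⟩ := v
    obtain ⟨h1, ⟨u, hu, h2⟩⟩ := hv
    refine ⟨u, ?_⟩
    have h1' : v1 = 1 := h1
    rw [𝒢.src_unit u hu, h1', h2]
  have hRopenσ : ∀ U : Set Γ, IsOpen U → ∃ V : Set (H × Quotient LA.setoid), IsOpen V ∧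
      (fun y : Γ => ((1 : H), Quotient.mk LA.setoid (𝒢.src y))) '' U = V ∩ SP2.unit := by
    intro U hU
    obtain ⟨V₀, hV₀, hV₀eq⟩ := 𝒢.open_src U hU
    refine ⟨(Set.univ : Set H) ×ˢ (Quotient.mk LA.setoid '' V₀),
      isOpen_univ.prod (openqG V₀ hV₀), ?_⟩
    rw [hSP2unit]
    ext ⟨h, c⟩
    constructor
    · rintro ⟨y, hy, heq⟩
      obtain ⟨rfl, rfl⟩ : (1 : H) = h ∧ Quotient.mk LA.setoid (𝒢.src y) = c :=
        Prod.mk.injEq .. ▸ heq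
      have hsy : 𝒢.src y ∈ V₀ ∩ 𝒢.unit := by rw [← hV₀eq]; exact ⟨y, hy, rfl⟩
      exact ⟨⟨trivial, ⟨𝒢.src y, hsy.1, rfl⟩⟩, rfl, ⟨𝒢.src y, hsy.2, rfl⟩⟩
    · rintro ⟨⟨-, hc1⟩, hh, hc2⟩
      have hc : c ∈ Quotient.mk LA.setoid '' (V₀ ∩ 𝒢.unit) := by
        rw [← hUnitG V₀]; exact ⟨hc1, hc2⟩
      obtain ⟨x, hx, rfl⟩ := hc
      have hx' : x ∈ 𝒢.src '' U := by rw [hV₀eq]; exact hx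
      obtain ⟨y, hy, hxy⟩ := hx'
      have hh1 : h = 1 := hh
      exact ⟨y, hy, by
        show ((1 : H), Quotient.mk LA.setoid (𝒢.src y)) = (h, Quotient.mk LA.setoid x)
        rw [hxy, hh1]⟩
  have hRσact : ∀ (y : Γ) (p : H × Quotient LA.setoid),
      ((1 : H), Quotient.mk LA.setoid (𝒢.src y)) = SP2.rng p →
      ((1 : H), Quotient.mk LA.setoid (𝒢.src (actRdef 𝒢 LA RA y p))) = SP2.src p := by
    intro y p hp
    obtain ⟨h, d⟩ := p
    obtain ⟨z, rfl, hz⟩ := compR y h d hp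
    rw [specR y h z hz, hSP2src, 𝒢.src_mul _ _ hz]
  have hRunitact : ∀ y : Γ,
      actRdef 𝒢 LA RA y ((1 : H), Quotient.mk LA.setoid (𝒢.src y)) = y := by
    intro y
    have h1 : 𝒢.src (RA.act y 1) = 𝒢.rng (𝒢.src y) := by
      rw [RA.act_one, 𝒢.rng_unit _ (𝒢.src_mem y)]
    rw [specR y 1 (𝒢.src y) h1, RA.act_one, 𝒢.mul_src_self]
  have hRactact : ∀ (y : Γ) (p q : H × Quotient LA.setoid),
      ((1 : H), Quotient.mk LA.setoid (𝒢.src y)) = SP2.rng p → SP2.src p = SP2.rng q →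
      actRdef 𝒢 LA RA (actRdef 𝒢 LA RA y p) q = actRdef 𝒢 LA RA y (SP2.mul p q) := by
    intro y p q h1 h2
    obtain ⟨s, d1⟩ := p
    obtain ⟨t, d2⟩ := q
    obtain ⟨z1, rfl, hz1⟩ := compR y s d1 h1
    rw [hSP2src] at h2
    obtain ⟨z2, rfl, hz2⟩ := compR z1 t d2 h2
    rw [specR y s z1 hz1]
    have hsrcw : 𝒢.src (RA.act (𝒢.mul (RA.act y s) z1) t) = 𝒢.rng z2 := by
      rw [RA.src_act, 𝒢.src_mul _ _ hz1, ← RA.src_act]; exact hz2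
    rw [specR _ t z2 hsrcw]
    rw [hSP2mul s t z1 z2 hz2]
    have hpre1 : 𝒢.src (RA.act y (s * t)) = 𝒢.rng (RA.act z1 t) := by
      calc 𝒢.src (RA.act y (s * t)) = RA.act (𝒢.src y) (s * t) := RA.src_act y (s * t)
        _ = RA.act (RA.act (𝒢.src y) s) t := (RA.act_mul _ s t).symm
        _ = RA.act (𝒢.src (RA.act y s)) t := by rw [RA.src_act]
        _ = RA.act (𝒢.rng z1) t := by rw [hz1]
        _ = 𝒢.rng (RA.act z1 t) := (RA.rng_act z1 t).symm
    have hyw : 𝒢.src (RA.act y (s * t)) = 𝒢.rng (𝒢.mul (RA.act z1 t) z2) :=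
      hpre1.trans (𝒢.rng_mul _ _ hz2).symm
    rw [specR y (s * t) _ hyw]
    have hexp : RA.act (𝒢.mul (RA.act y s) z1) t
        = 𝒢.mul (RA.act y (s * t)) (RA.act z1 t) := by
      rw [← RA.mul_act (RA.act y s) z1 t hz1, RA.act_mul]
    rw [hexp, 𝒢.mul_assoc' _ _ _ hpre1 hz2]
  have hRFree : ∀ (y : Γ) (p : H × Quotient LA.setoid),
      ((1 : H), Quotient.mk LA.setoid (𝒢.src y)) = SP2.rng p →
      actRdef 𝒢 LA RA y p = y → p ∈ SP2.unit := by
    intro y p hp hact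
    obtain ⟨h, d⟩ := p
    obtain ⟨z, rfl, hz⟩ := compR y h d hp
    rw [specR y h z hz] at hact
    have h1 : RA.act (𝒢.rng y) h = 𝒢.rng y := by
      conv_rhs => rw [← hact, 𝒢.rng_mul _ _ hz, RA.rng_act]
    have hone : h = 1 := hRfree _ _ h1
    subst hone
    rw [RA.act_one] at hact hz
    have hzval : z = 𝒢.src y := by
      have h2 := 𝒢.cancel_left hz
      rw [hact, 𝒢.inv_mul'] at h2
      exact h2.symm
    rw [hSP2unit]
    exact ⟨rfl, ⟨𝒢.src y, 𝒢.src_mem y, by rw [hzval]⟩⟩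
  -- properness of the left action
  have hLProper : ∀ K : Set (Γ × Γ), IsCompact K →
      IsCompact {p : (Quotient RA.setoid × G) × Γ |
        SP1.src p.1 = (Quotient.mk RA.setoid (𝒢.rng p.2), (1 : G)) ∧
        (actLdef 𝒢 LA RA p.1 p.2, p.2) ∈ K} := by
    intro K hK
    have hK1 : IsCompact (Prod.fst '' K) := hK.image continuous_fst
    have hK2 : IsCompact (Prod.snd '' K) := hK.image continuous_snd
    set T := Prod.fst '' {p : G × Γ | (LA.act p.1 p.2, p.2) ∈
      (𝒢.src '' (Prod.fst '' K)) ×ˢ (𝒢.src '' (Prod.snd '' K))} with hTdef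
    have hT : IsCompact T :=
      (hLproper _ ((hK1.image 𝒢.continuous_src).prod (hK2.image 𝒢.continuous_src))).image
        continuous_fst
    set M := (fun p : G × Γ => LA.act p.1 p.2) '' (T ×ˢ (Prod.snd '' K)) with hMdef
    have hM : IsCompact M := (hT.prod hK2).image LA.continuous_act
    set N := ((Prod.fst '' K) ×ˢ (𝒢.inv '' M)) ∩ {p : Γ × Γ | 𝒢.src p.1 = 𝒢.rng p.2} with hNdef
    have hN : IsCompact N := (hK1.prod (hM.image 𝒢.continuous_inv)).inter_right
      (isClosed_eq (𝒢.continuous_src.comp continuous_fst) (𝒢.continuous_rng.comp continuous_snd))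
    set Xc := (fun p : Γ × Γ => 𝒢.mul p.1 p.2) '' N with hXdef
    have hXc : IsCompact Xc := hN.image_of_continuousOn
      (𝒢.continuous_mul.mono Set.inter_subset_right)
    set Pt := {q : (Γ × G) × Γ | 𝒢.src q.1.1 = 𝒢.rng (LA.act q.1.2 q.2) ∧
      (𝒢.mul q.1.1 (LA.act q.1.2 q.2), q.2) ∈ K} with hPtdef
    have hScl : IsClosed {q : (Γ × G) × Γ | 𝒢.src q.1.1 = 𝒢.rng (LA.act q.1.2 q.2)} :=
      isClosed_eq (𝒢.continuous_src.comp (continuous_fst.comp continuous_fst))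
        (𝒢.continuous_rng.comp (LA.continuous_act.comp
          ((continuous_snd.comp continuous_fst).prodMk continuous_snd)))
    have hFcont : ContinuousOn (fun q : (Γ × G) × Γ => (𝒢.mul q.1.1 (LA.act q.1.2 q.2), q.2))
        {q : (Γ × G) × Γ | 𝒢.src q.1.1 = 𝒢.rng (LA.act q.1.2 q.2)} := by
      refine ContinuousOn.prodMk ?_ continuous_snd.continuousOn
      have hg : Continuous (fun q : (Γ × G) × Γ => (q.1.1, LA.act q.1.2 q.2)) :=
        (continuous_fst.comp continuous_fst).prodMk (LA.continuous_act.comp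
          ((continuous_snd.comp continuous_fst).prodMk continuous_snd))
      exact 𝒢.continuous_mul.comp hg.continuousOn (fun q hq => hq)
    have hPtclosed : IsClosed Pt := by
      have h := hFcont.preimage_isClosed_of_isClosed hScl hK.isClosed
      exact h
    have hPtsub : Pt ⊆ (Xc ×ˢ T) ×ˢ (Prod.snd '' K) := by
      rintro ⟨⟨x, t⟩, y⟩ ⟨hsrc, hKm⟩
      have hyK2 : y ∈ Prod.snd '' K := ⟨_, hKm, rfl⟩
      have hwK1 : 𝒢.mul x (LA.act t y) ∈ Prod.fst '' K := ⟨_, hKm, rfl⟩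
      have htT : t ∈ T := by
        refine ⟨(t, 𝒢.src y), ⟨?_, ⟨y, hyK2, rfl⟩⟩, rfl⟩
        refine ⟨𝒢.mul x (LA.act t y), hwK1, ?_⟩
        rw [𝒢.src_mul _ _ hsrc, LA.src_act]
      have hmM : LA.act t y ∈ M := ⟨(t, y), ⟨htT, hyK2⟩, rfl⟩
      have hxX : x ∈ Xc := by
        refine ⟨(𝒢.mul x (LA.act t y), 𝒢.inv (LA.act t y)),
          ⟨⟨hwK1, ⟨_, hmM, rfl⟩⟩, ?_⟩, 𝒢.cancel_right hsrc⟩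
        show 𝒢.src (𝒢.mul x (LA.act t y)) = 𝒢.rng (𝒢.inv (LA.act t y))
        rw [𝒢.src_mul _ _ hsrc, 𝒢.rng_inv]
      exact ⟨⟨hxX, htT⟩, hyK2⟩
    have hPt : IsCompact Pt := (((hXc.prod hT).prod hK2)).of_isClosed_subset hPtclosed hPtsub
    have hQcont : Continuous (fun q : (Γ × G) × Γ =>
        ((Quotient.mk RA.setoid q.1.1, q.1.2), q.2)) :=
      ((contqH.comp (continuous_fst.comp continuous_fst)).prodMk
        (continuous_snd.comp continuous_fst)).prodMk continuous_snd
    have hPeq : {p : (Quotient RA.setoid × G) × Γ |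
        SP1.src p.1 = (Quotient.mk RA.setoid (𝒢.rng p.2), (1 : G)) ∧
        (actLdef 𝒢 LA RA p.1 p.2, p.2) ∈ K}
        = (fun q : (Γ × G) × Γ => ((Quotient.mk RA.setoid q.1.1, q.1.2), q.2)) '' Pt := by
      ext ⟨⟨c, t⟩, y⟩
      constructor
      · rintro ⟨h1, h2⟩
        obtain ⟨x, rfl, hx2⟩ := compL c t y h1
        refine ⟨((x, t), y), ⟨hx2, ?_⟩, rfl⟩
        rwa [specL x t y hx2] at h2
      · rintro ⟨⟨⟨x, t'⟩, y'⟩, ⟨hsrc, hKm⟩, heq⟩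
        replace heq : ((Quotient.mk RA.setoid x, t'), y') = ((c, t), y) := heq
        injection heq with h1 h2
        injection h1 with h3 h4
        subst h3; subst h4; subst h2
        constructor
        · rw [hSP1src]
          have hre : LA.act t'⁻¹ (𝒢.src x) = 𝒢.rng y' := by
            rw [hsrc, LA.rng_act, Lcancel']
          rw [hre]
        · rw [specL x t' y' hsrc]; exact hKm
    rw [hPeq]
    exact hPt.image hQcont
  -- properness of the right action
  have hRProper : ∀ K : Set (Γ × Γ), IsCompact K →
      IsCompact {p : Γ × (H × Quotient LA.setoid) |
        ((1 : H), Quotient.mk LA.setoid (𝒢.src p.1)) = SP2.rng p.2 ∧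
        (actRdef 𝒢 LA RA p.1 p.2, p.1) ∈ K} := by
    intro K hK
    have hK1 : IsCompact (Prod.fst '' K) := hK.image continuous_fst
    have hK2 : IsCompact (Prod.snd '' K) := hK.image continuous_snd
    set T := Prod.snd '' {p : Γ × H | (RA.act p.1 p.2, p.1) ∈
      (𝒢.rng '' (Prod.fst '' K)) ×ˢ (𝒢.rng '' (Prod.snd '' K))} with hTdef
    have hT : IsCompact T :=
      (hRproper _ ((hK1.image 𝒢.continuous_rng).prod (hK2.image 𝒢.continuous_rng))).image
        continuous_snd
    set M := (fun p : Γ × H => RA.act p.1 p.2) '' ((Prod.snd '' K) ×ˢ T) with hMdef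
    have hM : IsCompact M := (hK2.prod hT).image RA.continuous_act
    set N := ((𝒢.inv '' M) ×ˢ (Prod.fst '' K)) ∩ {p : Γ × Γ | 𝒢.src p.1 = 𝒢.rng p.2} with hNdef
    have hN : IsCompact N := ((hM.image 𝒢.continuous_inv).prod hK1).inter_right
      (isClosed_eq (𝒢.continuous_src.comp continuous_fst) (𝒢.continuous_rng.comp continuous_snd))
    set Xc := (fun p : Γ × Γ => 𝒢.mul p.1 p.2) '' N with hXdef
    have hXc : IsCompact Xc := hN.image_of_continuousOn
      (𝒢.continuous_mul.mono Set.inter_subset_right)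
    set Pt := {q : Γ × (H × Γ) | 𝒢.src (RA.act q.1 q.2.1) = 𝒢.rng q.2.2 ∧
      (𝒢.mul (RA.act q.1 q.2.1) q.2.2, q.1) ∈ K} with hPtdef
    have hScl : IsClosed {q : Γ × (H × Γ) | 𝒢.src (RA.act q.1 q.2.1) = 𝒢.rng q.2.2} :=
      isClosed_eq (𝒢.continuous_src.comp (RA.continuous_act.comp
          (continuous_fst.prodMk (continuous_fst.comp continuous_snd))))
        (𝒢.continuous_rng.comp (continuous_snd.comp continuous_snd))
    have hFcont : ContinuousOn (fun q : Γ × (H × Γ) => (𝒢.mul (RA.act q.1 q.2.1) q.2.2, q.1))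
        {q : Γ × (H × Γ) | 𝒢.src (RA.act q.1 q.2.1) = 𝒢.rng q.2.2} := by
      refine ContinuousOn.prodMk ?_ continuous_fst.continuousOn
      have hg : Continuous (fun q : Γ × (H × Γ) => (RA.act q.1 q.2.1, q.2.2)) :=
        (RA.continuous_act.comp (continuous_fst.prodMk
          (continuous_fst.comp continuous_snd))).prodMk (continuous_snd.comp continuous_snd)
      exact 𝒢.continuous_mul.comp hg.continuousOn (fun q hq => hq)
    have hPtclosed : IsClosed Pt := by
      have h := hFcont.preimage_isClosed_of_isClosed hScl hK.isClosed
      exact h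
    have hPtsub : Pt ⊆ (Prod.snd '' K) ×ˢ (T ×ˢ Xc) := by
      rintro ⟨y, h, z⟩ ⟨hsrc, hKm⟩
      have hyK2 : y ∈ Prod.snd '' K := ⟨_, hKm, rfl⟩
      have hwK1 : 𝒢.mul (RA.act y h) z ∈ Prod.fst '' K := ⟨_, hKm, rfl⟩
      have hhT : h ∈ T := by
        refine ⟨(𝒢.rng y, h), ⟨?_, ⟨y, hyK2, rfl⟩⟩, rfl⟩
        refine ⟨𝒢.mul (RA.act y h) z, hwK1, ?_⟩
        rw [𝒢.rng_mul _ _ hsrc, RA.rng_act]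
      have hmM : RA.act y h ∈ M := ⟨(y, h), ⟨hyK2, hhT⟩, rfl⟩
      have hzX : z ∈ Xc := by
        refine ⟨(𝒢.inv (RA.act y h), 𝒢.mul (RA.act y h) z),
          ⟨⟨⟨_, hmM, rfl⟩, hwK1⟩, ?_⟩, 𝒢.cancel_left hsrc⟩
        show 𝒢.src (𝒢.inv (RA.act y h)) = 𝒢.rng (𝒢.mul (RA.act y h) z)
        rw [𝒢.src_inv, 𝒢.rng_mul _ _ hsrc]
      exact ⟨hyK2, hhT, hzX⟩
    have hPt : IsCompact Pt := ((hK2.prod (hT.prod hXc))).of_isClosed_subset hPtclosed hPtsub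
    have hQcont : Continuous (fun q : Γ × (H × Γ) =>
        (q.1, (q.2.1, Quotient.mk LA.setoid q.2.2))) :=
      continuous_fst.prodMk ((continuous_fst.comp continuous_snd).prodMk
        (contqG.comp (continuous_snd.comp continuous_snd)))
    have hPeq : {p : Γ × (H × Quotient LA.setoid) |
        ((1 : H), Quotient.mk LA.setoid (𝒢.src p.1)) = SP2.rng p.2 ∧
        (actRdef 𝒢 LA RA p.1 p.2, p.1) ∈ K}
        = (fun q : Γ × (H × Γ) => (q.1, (q.2.1, Quotient.mk LA.setoid q.2.2))) '' Pt := by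
      ext ⟨y, h, d⟩
      constructor
      · rintro ⟨h1, h2⟩
        obtain ⟨z, rfl, hz⟩ := compR y h d h1
        refine ⟨(y, (h, z)), ⟨hz, ?_⟩, rfl⟩
        rwa [specR y h z hz] at h2
      · rintro ⟨⟨y', h', z⟩, ⟨hsrc, hKm⟩, heq⟩
        replace heq : (y', (h', Quotient.mk LA.setoid z)) = (y, (h, d)) := heq
        injection heq with h1 h2
        injection h2 with h3 h4
        subst h1; subst h3; subst h4
        constructor
        · rw [hSP2rng]
          have hre : RA.act (𝒢.rng z) h'⁻¹ = 𝒢.src y' := by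
            rw [← hsrc, RA.src_act, Rcancel]
          rw [hre]
        · rw [specR y' h' z hsrc]; exact hKm
    rw [hPeq]
    exact hPt.image hQcont
  -- continuity of the left action map
  have hinjH : ∀ (u : Γ) (k k' : H), RA.act u k = RA.act u k' → k = k' := by
    intro u k k' hkk
    have h2 : RA.act (RA.act u k) (k⁻¹ * k') = RA.act u k := by
      rw [RA.act_mul, mul_inv_cancel_left, ← hkk]
    have h3 := hRfree _ _ h2
    rwa [inv_mul_eq_one] at h3
  set τH : Γ → Γ → H := fun u v => if h : ∃ k, RA.act u k = v then h.choose else 1 with hτHdef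
  have hτHspec : ∀ u v, (∃ k, RA.act u k = v) → RA.act u (τH u v) = v := by
    intro u v h
    simp only [hτHdef]
    rw [dif_pos h]
    exact h.choose_spec
  have hτHcont := translation_continuousOn RA.act RA.continuous_act hinjH hRproper τH hτHspec
  have hLcontact : ContinuousOn
      (fun p : (Quotient RA.setoid × G) × Γ => actLdef 𝒢 LA RA p.1 p.2)
      {p : (Quotient RA.setoid × G) × Γ |
        SP1.src p.1 = (Quotient.mk RA.setoid (𝒢.rng p.2), (1 : G))} := by
    apply continuousOn_of_comp_openMap
      (Q := fun q : (Γ × G) × Γ => ((Quotient.mk RA.setoid q.1.1, q.1.2), q.2))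
      ((openqH.prodMap IsOpenMap.id).prodMap IsOpenMap.id)
      (by rintro ⟨⟨c, t⟩, y⟩
          obtain ⟨x, rfl⟩ := Quotient.exists_rep c
          exact ⟨((x, t), y), rfl⟩)
    have hDmem : ∀ q ∈ (fun q : (Γ × G) × Γ => ((Quotient.mk RA.setoid q.1.1, q.1.2), q.2)) ⁻¹'
        {p : (Quotient RA.setoid × G) × Γ |
          SP1.src p.1 = (Quotient.mk RA.setoid (𝒢.rng p.2), (1 : G))},
        ∃ k, RA.act (𝒢.src q.1.1) k = 𝒢.rng (LA.act q.1.2 q.2) := by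
      rintro ⟨⟨x, t⟩, y⟩ hq
      obtain ⟨x', hx1, hx2⟩ := compL (Quotient.mk RA.setoid x) t y hq
      obtain ⟨k, hk⟩ := qHexact hx1.symm
      refine ⟨k, ?_⟩
      rw [← hx2, ← hk, RA.src_act]
    have hm : Continuous (fun q : (Γ × G) × Γ => LA.act q.1.2 q.2) :=
      LA.continuous_act.comp ((continuous_snd.comp continuous_fst).prodMk continuous_snd)
    have hpairD : Continuous (fun q : (Γ × G) × Γ =>
        (𝒢.src q.1.1, 𝒢.rng (LA.act q.1.2 q.2))) :=
      (𝒢.continuous_src.comp (continuous_fst.comp continuous_fst)).prodMk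
        (𝒢.continuous_rng.comp hm)
    have hτcomp : ContinuousOn (fun q : (Γ × G) × Γ =>
        τH (𝒢.src q.1.1) (𝒢.rng (LA.act q.1.2 q.2)))
        ((fun q : (Γ × G) × Γ => ((Quotient.mk RA.setoid q.1.1, q.1.2), q.2)) ⁻¹'
          {p : (Quotient RA.setoid × G) × Γ |
            SP1.src p.1 = (Quotient.mk RA.setoid (𝒢.rng p.2), (1 : G))}) :=
      hτHcont.comp hpairD.continuousOn (fun q hq => hDmem q hq)
    have hxh : ContinuousOn (fun q : (Γ × G) × Γ =>
        RA.act q.1.1 (τH (𝒢.src q.1.1) (𝒢.rng (LA.act q.1.2 q.2))))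
        ((fun q : (Γ × G) × Γ => ((Quotient.mk RA.setoid q.1.1, q.1.2), q.2)) ⁻¹'
          {p : (Quotient RA.setoid × G) × Γ |
            SP1.src p.1 = (Quotient.mk RA.setoid (𝒢.rng p.2), (1 : G))}) :=
      RA.continuous_act.comp_continuousOn
        (((continuous_fst.comp continuous_fst).continuousOn).prodMk hτcomp)
    have hF'cont : ContinuousOn (fun q : (Γ × G) × Γ =>
        𝒢.mul (RA.act q.1.1 (τH (𝒢.src q.1.1) (𝒢.rng (LA.act q.1.2 q.2)))) (LA.act q.1.2 q.2))
        ((fun q : (Γ × G) × Γ => ((Quotient.mk RA.setoid q.1.1, q.1.2), q.2)) ⁻¹'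
          {p : (Quotient RA.setoid × G) × Γ |
            SP1.src p.1 = (Quotient.mk RA.setoid (𝒢.rng p.2), (1 : G))}) := by
      refine 𝒢.continuous_mul.comp (hxh.prodMk hm.continuousOn) ?_
      rintro ⟨⟨x, t⟩, y⟩ hq
      have hsp := hτHspec (𝒢.src x) (𝒢.rng (LA.act t y)) (hDmem _ hq)
      show 𝒢.src (RA.act x _) = 𝒢.rng (LA.act t y)
      rw [RA.src_act]
      exact hsp
    refine hF'cont.congr ?_
    rintro ⟨⟨x, t⟩, y⟩ hq
    have hex := hDmem _ hq
    have hsp := hτHspec _ _ hex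
    show actLdef 𝒢 LA RA (Quotient.mk RA.setoid x, t) y
      = 𝒢.mul (RA.act x (τH (𝒢.src x) (𝒢.rng (LA.act t y)))) (LA.act t y)
    have h1 : 𝒢.src (RA.act x (τH (𝒢.src x) (𝒢.rng (LA.act t y)))) = 𝒢.rng (LA.act t y) := by
      rw [RA.src_act]
      exact hsp
    rw [← qHact x (τH (𝒢.src x) (𝒢.rng (LA.act t y)))]
    exact specL _ t y h1
  -- continuity of the right action map
  have hinjG : ∀ (u : Γ) (t t' : G), LA.act t u = LA.act t' u → t = t' := by
    intro u t t' htt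
    have h2 : LA.act (t'⁻¹ * t) u = u := by
      rw [← LA.act_act, htt, LA.act_act, inv_mul_cancel, LA.one_act]
    have h3 := hLfree _ _ h2
    rw [inv_mul_eq_one] at h3
    exact h3.symm
  have hpropG : ∀ K : Set (Γ × Γ), IsCompact K →
      IsCompact {p : Γ × G | (LA.act p.2 p.1, p.1) ∈ K} := by
    intro K hK
    have h1 := (hLproper K hK).image continuous_swap
    have h2 : Prod.swap '' {p : G × Γ | (LA.act p.1 p.2, p.2) ∈ K}
        = {p : Γ × G | (LA.act p.2 p.1, p.1) ∈ K} := by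
      ext ⟨a, b⟩
      constructor
      · rintro ⟨⟨t, x⟩, hm, heq⟩
        replace heq : (x, t) = (a, b) := heq
        injection heq with e1 e2
        subst e1; subst e2
        exact hm
      · intro hm
        exact ⟨(b, a), hm, rfl⟩
    rwa [h2] at h1
  set τG : Γ → Γ → G := fun u v => if h : ∃ t, LA.act t u = v then h.choose else 1 with hτGdef
  have hτGspec : ∀ u v, (∃ t, LA.act t u = v) → LA.act (τG u v) u = v := by
    intro u v h
    simp only [hτGdef]
    rw [dif_pos h]
    exact h.choose_spec
  have hτGcont := translation_continuousOn (fun u t => LA.act t u)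
    (LA.continuous_act.comp (continuous_snd.prodMk continuous_fst)) hinjG hpropG τG hτGspec
  have hRcontact : ContinuousOn
      (fun p : Γ × (H × Quotient LA.setoid) => actRdef 𝒢 LA RA p.1 p.2)
      {p : Γ × (H × Quotient LA.setoid) |
        ((1 : H), Quotient.mk LA.setoid (𝒢.src p.1)) = SP2.rng p.2} := by
    apply continuousOn_of_comp_openMap
      (Q := fun q : Γ × (H × Γ) => (q.1, (q.2.1, Quotient.mk LA.setoid q.2.2)))
      (IsOpenMap.id.prodMap (IsOpenMap.id.prodMap openqG))
      (by rintro ⟨y, h, d⟩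
          obtain ⟨z, rfl⟩ := Quotient.exists_rep d
          exact ⟨(y, (h, z)), rfl⟩)
    have hDmem : ∀ q ∈ (fun q : Γ × (H × Γ) => (q.1, (q.2.1, Quotient.mk LA.setoid q.2.2))) ⁻¹'
        {p : Γ × (H × Quotient LA.setoid) |
          ((1 : H), Quotient.mk LA.setoid (𝒢.src p.1)) = SP2.rng p.2},
        ∃ t, LA.act t (𝒢.src (RA.act q.1 q.2.1)) = 𝒢.rng q.2.2 := by
      rintro ⟨y, h, z⟩ hq
      obtain ⟨z', hz1, hz2⟩ := compR y h (Quotient.mk LA.setoid z) hq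
      obtain ⟨t, ht⟩ := qGexact hz1
      refine ⟨t, ?_⟩
      rw [hz2, ← LA.rng_act, ht]
    have hyh : Continuous (fun q : Γ × (H × Γ) => RA.act q.1 q.2.1) :=
      RA.continuous_act.comp (continuous_fst.prodMk (continuous_fst.comp continuous_snd))
    have hpairD : Continuous (fun q : Γ × (H × Γ) =>
        (𝒢.src (RA.act q.1 q.2.1), 𝒢.rng q.2.2)) :=
      (𝒢.continuous_src.comp hyh).prodMk
        (𝒢.continuous_rng.comp (continuous_snd.comp continuous_snd))
    have hτcomp : ContinuousOn (fun q : Γ × (H × Γ) =>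
        τG (𝒢.src (RA.act q.1 q.2.1)) (𝒢.rng q.2.2))
        ((fun q : Γ × (H × Γ) => (q.1, (q.2.1, Quotient.mk LA.setoid q.2.2))) ⁻¹'
          {p : Γ × (H × Quotient LA.setoid) |
            ((1 : H), Quotient.mk LA.setoid (𝒢.src p.1)) = SP2.rng p.2}) :=
      hτGcont.comp hpairD.continuousOn (fun q hq => hDmem q hq)
    have hz' : ContinuousOn (fun q : Γ × (H × Γ) =>
        LA.act (τG (𝒢.src (RA.act q.1 q.2.1)) (𝒢.rng q.2.2))⁻¹ q.2.2)
        ((fun q : Γ × (H × Γ) => (q.1, (q.2.1, Quotient.mk LA.setoid q.2.2))) ⁻¹'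
          {p : Γ × (H × Quotient LA.setoid) |
            ((1 : H), Quotient.mk LA.setoid (𝒢.src p.1)) = SP2.rng p.2}) :=
      LA.continuous_act.comp_continuousOn
        (hτcomp.inv.prodMk (continuous_snd.comp continuous_snd).continuousOn)
    have hF'cont : ContinuousOn (fun q : Γ × (H × Γ) =>
        𝒢.mul (RA.act q.1 q.2.1) (LA.act (τG (𝒢.src (RA.act q.1 q.2.1)) (𝒢.rng q.2.2))⁻¹ q.2.2))
        ((fun q : Γ × (H × Γ) => (q.1, (q.2.1, Quotient.mk LA.setoid q.2.2))) ⁻¹'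
          {p : Γ × (H × Quotient LA.setoid) |
            ((1 : H), Quotient.mk LA.setoid (𝒢.src p.1)) = SP2.rng p.2}) := by
      refine 𝒢.continuous_mul.comp (hyh.continuousOn.prodMk hz') ?_
      rintro ⟨y, h, z⟩ hq
      have hsp : LA.act (τG (𝒢.src (RA.act y h)) (𝒢.rng z)) (𝒢.src (RA.act y h)) = 𝒢.rng z :=
        hτGspec _ _ (hDmem _ hq)
      show 𝒢.src (RA.act y h) = 𝒢.rng (LA.act (τG (𝒢.src (RA.act y h)) (𝒢.rng z))⁻¹ z)
      set k := τG (𝒢.src (RA.act y h)) (𝒢.rng z) with hkdef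
      rw [LA.rng_act, ← hsp, Lcancel']
    refine hF'cont.congr ?_
    rintro ⟨y, h, z⟩ hq
    have hsp : LA.act (τG (𝒢.src (RA.act y h)) (𝒢.rng z)) (𝒢.src (RA.act y h)) = 𝒢.rng z :=
      hτGspec _ _ (hDmem _ hq)
    show actRdef 𝒢 LA RA y (h, Quotient.mk LA.setoid z)
      = 𝒢.mul (RA.act y h) (LA.act (τG (𝒢.src (RA.act y h)) (𝒢.rng z))⁻¹ z)
    set k := τG (𝒢.src (RA.act y h)) (𝒢.rng z) with hkdef
    have h1 : 𝒢.src (RA.act y h) = 𝒢.rng (LA.act k⁻¹ z) := by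
      rw [LA.rng_act, ← hsp, Lcancel']
    rw [← qGact k⁻¹ z]
    exact specR y h _ h1
  -- the two actions commute
  have hcommute : ∀ (x : Γ) (t : G) (y : Γ) (h : H) (z : Γ),
      𝒢.src x = 𝒢.rng (LA.act t y) → 𝒢.src (RA.act y h) = 𝒢.rng z →
      actRdef 𝒢 LA RA (actLdef 𝒢 LA RA (Quotient.mk RA.setoid x, t) y)
          (h, Quotient.mk LA.setoid z)
        = actLdef 𝒢 LA RA (Quotient.mk RA.setoid x, t)
          (actRdef 𝒢 LA RA y (h, Quotient.mk LA.setoid z)) := by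
    intro x t y h z hxy hyz
    rw [specL x t y hxy, specR y h z hyz]
    have hw : 𝒢.src (RA.act (𝒢.mul x (LA.act t y)) h) = 𝒢.rng (LA.act t z) := by
      calc 𝒢.src (RA.act (𝒢.mul x (LA.act t y)) h)
          = RA.act (𝒢.src (𝒢.mul x (LA.act t y))) h := RA.src_act _ h
        _ = RA.act (𝒢.src (LA.act t y)) h := by rw [𝒢.src_mul _ _ hxy]
        _ = RA.act (LA.act t (𝒢.src y)) h := by rw [LA.src_act]
        _ = LA.act t (RA.act (𝒢.src y) h) := (hcomm t _ h).symm
        _ = LA.act t (𝒢.src (RA.act y h)) := by rw [RA.src_act]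
        _ = LA.act t (𝒢.rng z) := by rw [hyz]
        _ = 𝒢.rng (LA.act t z) := (LA.rng_act t z).symm
    have hv' : 𝒢.src (RA.act x h) = 𝒢.rng (LA.act t (𝒢.mul (RA.act y h) z)) := by
      calc 𝒢.src (RA.act x h) = RA.act (𝒢.src x) h := RA.src_act x h
        _ = RA.act (𝒢.rng (LA.act t y)) h := by rw [hxy]
        _ = RA.act (LA.act t (𝒢.rng y)) h := by rw [LA.rng_act]
        _ = LA.act t (RA.act (𝒢.rng y) h) := (hcomm t _ h).symm
        _ = LA.act t (𝒢.rng (RA.act y h)) := by rw [RA.rng_act]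
        _ = LA.act t (𝒢.rng (𝒢.mul (RA.act y h) z)) := by rw [𝒢.rng_mul _ _ hyz]
        _ = 𝒢.rng (LA.act t (𝒢.mul (RA.act y h) z)) := (LA.rng_act t _).symm
    calc actRdef 𝒢 LA RA (𝒢.mul x (LA.act t y)) (h, Quotient.mk LA.setoid z)
        = actRdef 𝒢 LA RA (𝒢.mul x (LA.act t y)) (h, Quotient.mk LA.setoid (LA.act t z)) := by
          rw [qGact]
      _ = 𝒢.mul (RA.act (𝒢.mul x (LA.act t y)) h) (LA.act t z) := specR _ h (LA.act t z) hw
      _ = 𝒢.mul (𝒢.mul (RA.act x h) (LA.act t (RA.act y h))) (LA.act t z) := by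
          rw [← RA.mul_act x (LA.act t y) h hxy, ← hcomm t y h]
      _ = 𝒢.mul (RA.act x h) (𝒢.mul (LA.act t (RA.act y h)) (LA.act t z)) := by
          have hpre1 : 𝒢.src (RA.act x h) = 𝒢.rng (LA.act t (RA.act y h)) := by
            rw [RA.src_act, hxy, ← RA.rng_act, ← hcomm]
          have hpre2 : 𝒢.src (LA.act t (RA.act y h)) = 𝒢.rng (LA.act t z) := by
            rw [LA.src_act, hyz, LA.rng_act]
          rw [𝒢.mul_assoc' _ _ _ hpre1 hpre2]
      _ = 𝒢.mul (RA.act x h) (LA.act t (𝒢.mul (RA.act y h) z)) := by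
          rw [LA.mul_act t (RA.act y h) z hyz]
      _ = actLdef 𝒢 LA RA (Quotient.mk RA.setoid x, t) (𝒢.mul (RA.act y h) z) := by
          rw [← qHact x h]
          exact (specL (RA.act x h) t _ hv').symm
  -- assemble the two groupoid actions
  let LAct : GroupoidLeftAction SP1 Γ :=
    { ρ := fun y : Γ => (Quotient.mk RA.setoid (𝒢.rng y), (1 : G))
      act := actLdef 𝒢 LA RA
      ρ_mem := hLρmem
      continuous_ρ := hLcontρ
      ρ_surj := hLρsurj
      open_ρ := hLopenρ
      continuous_act := hLcontact
      ρ_act := hLρact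
      unit_act := hLunitact
      act_act := hLactact }
  let RAct : GroupoidRightAction SP2 Γ :=
    { σ := fun y : Γ => ((1 : H), Quotient.mk LA.setoid (𝒢.src y))
      act := actRdef 𝒢 LA RA
      σ_mem := hRσmem
      continuous_σ := hRcontσ
      σ_surj := hRσsurj
      open_σ := hRopenσ
      continuous_act := hRcontact
      σ_act := hRσact
      unit_act := hRunitact
      act_act := hRactact }
  refine ⟨LAct, RAct, fun y => rfl, specL, hLFree, hLProper, fun y => rfl, specR,
    hRFree, hRProper, hcommute, ?_, ?_⟩
  -- (4) the homeomorphism Γ/(H⋉(G\Γ)) ≅ (Γ⁰/H)×{e}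
  · have relR1 : ∀ (x : Γ) (k : H), (RAct.setoid).r x (RA.act x k) := by
      intro x k
      refine ⟨(k, Quotient.mk LA.setoid (𝒢.src (RA.act x k))), ?_, ?_⟩
      · show ((1 : H), Quotient.mk LA.setoid (𝒢.src x))
          = SP2.rng (k, Quotient.mk LA.setoid (𝒢.src (RA.act x k)))
        rw [hSP2rng]
        have hre : RA.act (𝒢.rng (𝒢.src (RA.act x k))) k⁻¹ = 𝒢.src x := by
          rw [𝒢.rng_unit _ (𝒢.src_mem _), RA.src_act, Rcancel]
        rw [hre]
      · show actRdef 𝒢 LA RA x (k, Quotient.mk LA.setoid (𝒢.src (RA.act x k))) = RA.act x k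
        have hpre : 𝒢.src (RA.act x k) = 𝒢.rng (𝒢.src (RA.act x k)) :=
          (𝒢.rng_unit _ (𝒢.src_mem _)).symm
        rw [specR x k _ hpre, 𝒢.mul_src_self]
    have relR2 : ∀ y : Γ, (RAct.setoid).r y (𝒢.rng y) := by
      intro y
      refine ⟨((1 : H), Quotient.mk LA.setoid (𝒢.inv y)), ?_, ?_⟩
      · show ((1 : H), Quotient.mk LA.setoid (𝒢.src y))
          = SP2.rng ((1 : H), Quotient.mk LA.setoid (𝒢.inv y))
        rw [hSP2rng]
        have hre : RA.act (𝒢.rng (𝒢.inv y)) (1 : H)⁻¹ = 𝒢.src y := by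
          rw [inv_one, RA.act_one, 𝒢.rng_inv]
        rw [hre]
      · show actRdef 𝒢 LA RA y ((1 : H), Quotient.mk LA.setoid (𝒢.inv y)) = 𝒢.rng y
        have hpre : 𝒢.src (RA.act y 1) = 𝒢.rng (𝒢.inv y) := by
          rw [RA.act_one, 𝒢.rng_inv]
        rw [specR y 1 _ hpre, RA.act_one, 𝒢.mul_inv']
    have hfresp : ∀ a b : Γ, (RAct.setoid).r a b →
        Quotient.mk RA.setoid (𝒢.rng a) = Quotient.mk RA.setoid (𝒢.rng b) := by
      rintro a b ⟨⟨k, d⟩, h1, h2⟩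
      obtain ⟨z, rfl, hz⟩ := compR a k d h1
      replace h2 : actRdef 𝒢 LA RA a (k, Quotient.mk LA.setoid z) = b := h2
      rw [specR a k z hz] at h2
      rw [← h2, 𝒢.rng_mul _ _ hz, RA.rng_act, qHact]
    set f4 : Γ → {p : Quotient RA.setoid × G //
        p.1 ∈ Quotient.mk RA.setoid '' 𝒢.unit ∧ p.2 = 1} :=
      fun y => ⟨(Quotient.mk RA.setoid (𝒢.rng y), 1),
        ⟨𝒢.rng y, 𝒢.rng_mem y, rfl⟩, rfl⟩ with hf4def
    have hresp4 : ∀ a b : Γ, (RAct.setoid).r a b → f4 a = f4 b := by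
      intro a b hab
      apply Subtype.ext
      show (Quotient.mk RA.setoid (𝒢.rng a), (1 : G)) = (Quotient.mk RA.setoid (𝒢.rng b), 1)
      rw [hfresp a b hab]
    have hg1resp : ∀ a b : Γ, (RA.setoid).r a b →
        Quotient.mk RAct.setoid a = Quotient.mk RAct.setoid b := by
      rintro a b ⟨k, rfl⟩
      exact Quotient.sound (relR1 a k)
    have hleft : ∀ q : Quotient RAct.setoid,
        Quotient.lift (fun x : Γ => Quotient.mk RAct.setoid x) hg1resp
          ((Quotient.lift f4 hresp4 q).val.1) = q := by
      refine Quotient.ind ?_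
      intro y
      show Quotient.mk RAct.setoid (𝒢.rng y) = Quotient.mk RAct.setoid y
      exact (Quotient.sound (relR2 y)).symm
    have hright : ∀ a : {p : Quotient RA.setoid × G //
        p.1 ∈ Quotient.mk RA.setoid '' 𝒢.unit ∧ p.2 = 1},
        Quotient.lift f4 hresp4
          (Quotient.lift (fun x : Γ => Quotient.mk RAct.setoid x) hg1resp a.val.1) = a := by
      intro a
      obtain ⟨u, hu, hcu⟩ := a.2.1
      have ht1 : a.1.2 = 1 := a.2.2
      apply Subtype.ext
      rw [← hcu]
      refine Prod.ext ?_ ht1.symm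
      show Quotient.mk RA.setoid (𝒢.rng u) = (a.val).1
      rw [𝒢.rng_unit u hu]
      exact hcu
    refine ⟨{ toFun := Quotient.lift f4 hresp4,
              invFun := fun a => Quotient.lift (fun x : Γ => Quotient.mk RAct.setoid x)
                hg1resp a.val.1,
              left_inv := hleft,
              right_inv := hright,
              continuous_toFun := by
                refine Continuous.quotient_lift ?_ hresp4
                exact Continuous.subtype_mk hLcontρ _
              continuous_invFun := by
                exact (Continuous.quotient_lift continuous_quot_mk hg1resp).comp
                  (continuous_fst.comp continuous_subtype_val) },
          fun y => rfl⟩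
  -- (5) the homeomorphism ((Γ/H)⋊G)\Γ ≅ {e}×(G\Γ⁰)
  · have relL1 : ∀ (t : G) (x : Γ), (LAct.setoid).r x (LA.act t x) := by
      intro t x
      refine ⟨(Quotient.mk RA.setoid (𝒢.rng (LA.act t x)), t), ?_, ?_⟩
      · show SP1.src (Quotient.mk RA.setoid (𝒢.rng (LA.act t x)), t)
          = (Quotient.mk RA.setoid (𝒢.rng x), (1 : G))
        rw [hSP1src]
        have hre : LA.act t⁻¹ (𝒢.src (𝒢.rng (LA.act t x))) = 𝒢.rng x := by
          rw [𝒢.src_unit _ (𝒢.rng_mem _), LA.rng_act, Lcancel']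
        rw [hre]
      · show actLdef 𝒢 LA RA (Quotient.mk RA.setoid (𝒢.rng (LA.act t x)), t) x = LA.act t x
        have hpre : 𝒢.src (𝒢.rng (LA.act t x)) = 𝒢.rng (LA.act t x) :=
          𝒢.src_unit _ (𝒢.rng_mem _)
        rw [specL _ t x hpre, 𝒢.rng_mul_self]
    have relL2 : ∀ y : Γ, (LAct.setoid).r y (𝒢.src y) := by
      intro y
      refine ⟨(Quotient.mk RA.setoid (𝒢.inv y), (1 : G)), ?_, ?_⟩
      · show SP1.src (Quotient.mk RA.setoid (𝒢.inv y), (1 : G))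
          = (Quotient.mk RA.setoid (𝒢.rng y), (1 : G))
        rw [hSP1src]
        have hre : LA.act (1 : G)⁻¹ (𝒢.src (𝒢.inv y)) = 𝒢.rng y := by
          rw [inv_one, LA.one_act, 𝒢.src_inv]
        rw [hre]
      · show actLdef 𝒢 LA RA (Quotient.mk RA.setoid (𝒢.inv y), (1 : G)) y = 𝒢.src y
        have hpre : 𝒢.src (𝒢.inv y) = 𝒢.rng (LA.act 1 y) := by
          rw [LA.one_act, 𝒢.src_inv]
        rw [specL _ 1 y hpre, LA.one_act, 𝒢.inv_mul']
    have hfresp : ∀ a b : Γ, (LAct.setoid).r a b →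
        Quotient.mk LA.setoid (𝒢.src a) = Quotient.mk LA.setoid (𝒢.src b) := by
      rintro a b ⟨⟨c, t⟩, h1, h2⟩
      obtain ⟨x, rfl, hx⟩ := compL c t a h1
      replace h2 : actLdef 𝒢 LA RA (Quotient.mk RA.setoid x, t) a = b := h2
      rw [specL x t a hx] at h2
      rw [← h2, 𝒢.src_mul _ _ hx, LA.src_act, qGact]
    set f5 : Γ → {p : H × Quotient LA.setoid //
        p.1 = 1 ∧ p.2 ∈ Quotient.mk LA.setoid '' 𝒢.unit} :=
      fun y => ⟨((1 : H), Quotient.mk LA.setoid (𝒢.src y)),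
        rfl, ⟨𝒢.src y, 𝒢.src_mem y, rfl⟩⟩ with hf5def
    have hresp5 : ∀ a b : Γ, (LAct.setoid).r a b → f5 a = f5 b := by
      intro a b hab
      apply Subtype.ext
      show ((1 : H), Quotient.mk LA.setoid (𝒢.src a)) = ((1 : H), Quotient.mk LA.setoid (𝒢.src b))
      rw [hfresp a b hab]
    have hg1resp : ∀ a b : Γ, (LA.setoid).r a b →
        Quotient.mk LAct.setoid a = Quotient.mk LAct.setoid b := by
      rintro a b ⟨t, rfl⟩
      exact Quotient.sound (relL1 t a)
    have hleft : ∀ q : Quotient LAct.setoid,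
        Quotient.lift (fun x : Γ => Quotient.mk LAct.setoid x) hg1resp
          ((Quotient.lift f5 hresp5 q).val.2) = q := by
      refine Quotient.ind ?_
      intro y
      show Quotient.mk LAct.setoid (𝒢.src y) = Quotient.mk LAct.setoid y
      exact (Quotient.sound (relL2 y)).symm
    have hright : ∀ a : {p : H × Quotient LA.setoid //
        p.1 = 1 ∧ p.2 ∈ Quotient.mk LA.setoid '' 𝒢.unit},
        Quotient.lift f5 hresp5
          (Quotient.lift (fun x : Γ => Quotient.mk LAct.setoid x) hg1resp a.val.2) = a := by
      intro a
      obtain ⟨u, hu, hcu⟩ := a.2.2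
      have hh1 : a.1.1 = 1 := a.2.1
      apply Subtype.ext
      rw [← hcu]
      refine Prod.ext hh1.symm ?_
      show Quotient.mk LA.setoid (𝒢.src u) = (a.val).2
      rw [𝒢.src_unit u hu]
      exact hcu
    refine ⟨{ toFun := Quotient.lift f5 hresp5,
              invFun := fun a => Quotient.lift (fun x : Γ => Quotient.mk LAct.setoid x)
                hg1resp a.val.2,
              left_inv := hleft,
              right_inv := hright,
              continuous_toFun := by
                refine Continuous.quotient_lift ?_ hresp5
                exact Continuous.subtype_mk hRcontσ _
              continuous_invFun := by
                exact (Continuous.quotient_lift continuous_quot_mk hg1resp).comp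
                  (continuous_snd.comp continuous_subtype_val) },
          fun y => rfl⟩
end

section
/- Let G and H be locally compact Hausdorff topological groups acting freely and properly by automorphisms on the left and right, respectively, of a topological groupoid Γ, with commuting actions. Let x, y ∈ Γ satisfy G·s(x) = G·s(y). Then there is a unique t ∈ G with s(x) = t·s(y), and the element ζ = (x(t·y⁻¹)·H, t) of the semidirect-product groupoid (Γ/H)⋊G is the unique element of (Γ/H)⋊G such that ζ·y = x for the left action of (Γ/H)⋊G on the space Γ given by (zH, t)·w = z(t·w) whenever s(z) = r(t·w). -/
open MeasureTheory Filter Topology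

/-- For commuting free and proper actions of `G` and `H`, with
`G·s(x) = G·s(y)` there is a unique `t ∈ G` with `s(x) = t·s(y)`, and
`ζ = (x(t·y⁻¹)·H, t)` is the unique element of `(Γ/H)⋊G` with `ζ·y = x`. -/
theorem left_inner_product_unique
    {Γ G H : Type*} [TopologicalSpace Γ] [T2Space Γ] [LocallyCompactSpace Γ]
    [TopologicalSpace G] [Group G] [IsTopologicalGroup G] [T2Space G] [LocallyCompactSpace G]
    [TopologicalSpace H] [Group H] [IsTopologicalGroup H] [T2Space H] [LocallyCompactSpace H]
    (𝒢 : TopGroupoid Γ)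
    (LA : GroupLeftAction 𝒢 G) (RA : GroupRightAction 𝒢 H)
    (hLfree : LA.Free) (hLproper : LA.Proper)
    (hRfree : RA.Free) (hRproper : RA.Proper)
    (hcomm : ∀ (t : G) (x : Γ) (h : H), LA.act t (RA.act x h) = RA.act (LA.act t x) h)
    (Q : TopGroupoid (Quotient RA.setoid))
    (hQunit : Q.unit = Quotient.mk RA.setoid '' 𝒢.unit)
    (hQrng : ∀ x : Γ, Q.rng (Quotient.mk RA.setoid x) = Quotient.mk RA.setoid (𝒢.rng x))
    (hQsrc : ∀ x : Γ, Q.src (Quotient.mk RA.setoid x) = Quotient.mk RA.setoid (𝒢.src x))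
    (hQmul : ∀ x y : Γ, 𝒢.src x = 𝒢.rng y →
      Q.mul (Quotient.mk RA.setoid x) (Quotient.mk RA.setoid y)
        = Quotient.mk RA.setoid (𝒢.mul x y))
    (hQinv : ∀ x : Γ, Q.inv (Quotient.mk RA.setoid x) = Quotient.mk RA.setoid (𝒢.inv x))
    (SP : TopGroupoid (Quotient RA.setoid × G))
    (hSPunit : SP.unit = (Quotient.mk RA.setoid '' 𝒢.unit) ×ˢ ({1} : Set G))
    (hSPrng : ∀ (x : Γ) (t : G),
      SP.rng (Quotient.mk RA.setoid x, t) = (Quotient.mk RA.setoid (𝒢.rng x), 1))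
    (hSPsrc : ∀ (x : Γ) (t : G),
      SP.src (Quotient.mk RA.setoid x, t) = (Quotient.mk RA.setoid (LA.act t⁻¹ (𝒢.src x)), 1))
    (hSPmul : ∀ (x y : Γ) (s t : G), 𝒢.src x = 𝒢.rng (LA.act s y) →
      SP.mul (Quotient.mk RA.setoid x, s) (Quotient.mk RA.setoid y, t)
        = (Quotient.mk RA.setoid (𝒢.mul x (LA.act s y)), s * t))
    (hSPinv : ∀ (x : Γ) (t : G),
      SP.inv (Quotient.mk RA.setoid x, t) = (Quotient.mk RA.setoid (LA.act t⁻¹ (𝒢.inv x)), t⁻¹))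
    -- the left action of (Γ/H)⋊G on the space Γ
    (Act : GroupoidLeftAction SP Γ)
    (hρ : ∀ y : Γ, Act.ρ y = (Quotient.mk RA.setoid (𝒢.rng y), 1))
    (hact : ∀ (z : Γ) (t : G) (w : Γ), 𝒢.src z = 𝒢.rng (LA.act t w) →
      Act.act (Quotient.mk RA.setoid z, t) w = 𝒢.mul z (LA.act t w))
    (x y : Γ) (hxy : ∃ t : G, LA.act t (𝒢.src y) = 𝒢.src x) :
    (∃! t : G, LA.act t (𝒢.src y) = 𝒢.src x) ∧
    ∀ t : G, LA.act t (𝒢.src y) = 𝒢.src x →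
      SP.src (Quotient.mk RA.setoid (𝒢.mul x (LA.act t (𝒢.inv y))), t) = Act.ρ y ∧
      Act.act (Quotient.mk RA.setoid (𝒢.mul x (LA.act t (𝒢.inv y))), t) y = x ∧
      ∀ ζ' : Quotient RA.setoid × G, SP.src ζ' = Act.ρ y → Act.act ζ' y = x →
        ζ' = (Quotient.mk RA.setoid (𝒢.mul x (LA.act t (𝒢.inv y))), t) := by
  obtain ⟨t0, ht0⟩ := hxy
  have huniq : ∀ t t' : G, LA.act t (𝒢.src y) = 𝒢.src x →
      LA.act t' (𝒢.src y) = 𝒢.src x → t = t' := by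
    intro t t' ht ht'
    have h1 : LA.act (t'⁻¹ * t) (𝒢.src y) = 𝒢.src y := by
      rw [← LA.act_act, ht, ← ht', LA.act_act, inv_mul_cancel, LA.one_act]
    have h2 := hLfree _ _ h1
    have : t' * (t'⁻¹ * t) = t' * 1 := by rw [h2]
    simpa [mul_assoc] using this
  refine ⟨⟨t0, ht0, fun t' h => huniq t' t0 h ht0⟩, ?_⟩
  intro t ht
  set z := 𝒢.mul x (LA.act t (𝒢.inv y)) with hz
  have hcomp : 𝒢.src x = 𝒢.rng (LA.act t (𝒢.inv y)) := by
    rw [LA.rng_act, 𝒢.rng_inv, ht]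
  have hsz : 𝒢.src z = LA.act t (𝒢.rng y) := by
    rw [hz, 𝒢.src_mul _ _ hcomp, LA.src_act, 𝒢.src_inv]
  have h1 : SP.src (Quotient.mk RA.setoid z, t) = Act.ρ y := by
    rw [hSPsrc, hρ, hsz, LA.act_act, inv_mul_cancel, LA.one_act]
  have hcomp2 : 𝒢.src z = 𝒢.rng (LA.act t y) := by rw [hsz, LA.rng_act]
  have h2 : Act.act (Quotient.mk RA.setoid z, t) y = x := by
    rw [hact z t y hcomp2, hz,
      𝒢.mul_assoc' _ _ _ hcomp (by rw [LA.src_act, 𝒢.src_inv, LA.rng_act]),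
      LA.mul_act _ _ _ (𝒢.src_inv y), 𝒢.inv_mul', ht, 𝒢.mul_src_self]
  refine ⟨h1, h2, ?_⟩
  rintro ⟨q, s⟩ hsrc hactx
  obtain ⟨z0, rfl⟩ := q.exists_rep
  rw [hSPsrc, hρ] at hsrc
  have hfst : Quotient.mk RA.setoid (LA.act s⁻¹ (𝒢.src z0))
      = Quotient.mk RA.setoid (𝒢.rng y) := congrArg Prod.fst hsrc
  obtain ⟨h, hh⟩ : ∃ h : H, RA.act (LA.act s⁻¹ (𝒢.src z0)) h = 𝒢.rng y :=
    Quotient.exact hfst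
  set z' := RA.act z0 h with hz'
  have hmkz : Quotient.mk RA.setoid z0 = Quotient.mk RA.setoid z' :=
    Quotient.sound ⟨h, rfl⟩
  have hsz' : 𝒢.src z' = LA.act s (𝒢.rng y) := by
    rw [hz', RA.src_act, ← hh, ← hcomm, LA.act_act, mul_inv_cancel, LA.one_act]
  have hcomp' : 𝒢.src z' = 𝒢.rng (LA.act s y) := by rw [hsz', LA.rng_act]
  have hx : 𝒢.mul z' (LA.act s y) = x := by
    rw [← hact z' s y hcomp', ← hmkz]; exact hactx
  have hsx : LA.act s (𝒢.src y) = 𝒢.src x := by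
    rw [← hx, 𝒢.src_mul _ _ hcomp', LA.src_act]
  have hst : s = t := huniq s t hsx ht
  have hz'eq : z' = 𝒢.mul x (LA.act s (𝒢.inv y)) := by
    rw [← hx, 𝒢.mul_assoc' _ _ _ hcomp' (by rw [LA.src_act, LA.rng_act, 𝒢.rng_inv]),
      LA.mul_act _ _ _ (𝒢.rng_inv y).symm, 𝒢.mul_inv', ← hsz', 𝒢.mul_src_self]
  refine Prod.ext ?_ hst
  rw [hmkz, hz'eq, hst]
end

section
/- Let H be a locally compact Hausdorff topological group acting freely and properly on the right of a topological groupoid Γ by automorphisms. Then the orbit space Γ/H (with the quotient topology) is locally compact Hausdorff, and it becomes a topological groupoid with units Γ⁰/H, range r(xH) = r(x)H, source s(xH) = s(x)H, multiplication (xH)(yH) = (xy)H whenever s(x) = r(y), and inversion (xH)⁻¹ = x⁻¹H. In particular: the multiplication is well defined (independent of the choice of representatives z ∈ xH, w ∈ yH with s(z) = r(w)); the induced range and source maps are continuous and open; and the multiplication and inversion on Γ/H are continuous. -/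
open MeasureTheory Filter Topology

namespace QuotGpdConstr

open Set Filter Topology

variable {Γ H : Type*} [TopologicalSpace Γ] [T2Space Γ] [LocallyCompactSpace Γ]
  [TopologicalSpace H] [Group H] [IsTopologicalGroup H] [T2Space H] [LocallyCompactSpace H]
  {𝒢 : TopGroupoid Γ} (RA : GroupRightAction 𝒢 H)

theorem mk_eq_iff {x y : Γ} :
    Quotient.mk RA.setoid x = Quotient.mk RA.setoid y ↔ ∃ h : H, RA.act x h = y :=
  Quotient.eq

theorem act_act_inv (x : Γ) (h : H) : RA.act (RA.act x h) h⁻¹ = x := by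
  rw [RA.act_mul]; simp [RA.act_one]

theorem continuous_act_right (h : H) : Continuous fun x : Γ => RA.act x h :=
  RA.continuous_act.comp (continuous_id.prodMk continuous_const)

theorem isOpenMap_act (h : H) : IsOpenMap fun x : Γ => RA.act x h := by
  have : (fun x : Γ => RA.act x h) = (Homeomorph.mk
      ⟨fun x => RA.act x h, fun x => RA.act x h⁻¹, fun x => act_act_inv RA x h,
        fun x => by simpa using act_act_inv RA x h⁻¹⟩
      (continuous_act_right RA h) (continuous_act_right RA h⁻¹) : Γ → Γ) := rfl
  rw [this]
  exact Homeomorph.isOpenMap _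

theorem continuous_mk : Continuous (Quotient.mk RA.setoid) := continuous_quot_mk

theorem isOpenMap_mk : IsOpenMap (Quotient.mk RA.setoid) := by
  intro U hU
  have key : Quotient.mk RA.setoid ⁻¹' (Quotient.mk RA.setoid '' U)
      = ⋃ h : H, (fun x : Γ => RA.act x h⁻¹) '' U := by
    ext x
    simp only [Set.mem_preimage, Set.mem_image, Set.mem_iUnion]
    constructor
    · rintro ⟨u, huU, hux⟩
      obtain ⟨h, rfl⟩ := (mk_eq_iff RA).mp hux
      exact ⟨h⁻¹, u, huU, by simpa using rfl⟩
    · rintro ⟨h, u, huU, rfl⟩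
      exact ⟨u, huU, (mk_eq_iff RA).mpr ⟨h⁻¹, rfl⟩⟩
  have : IsOpen (Quotient.mk RA.setoid ⁻¹' (Quotient.mk RA.setoid '' U)) := by
    rw [key]; exact isOpen_iUnion fun h => isOpenMap_act RA h⁻¹ U hU
  rw [← isOpen_coinduced] at this
  exact this

theorem isQuotientMap_mk : IsQuotientMap (Quotient.mk RA.setoid) :=
  (isOpenMap_mk RA).isQuotientMap (continuous_mk RA) Quotient.mk_surjective

theorem isProperMap_E (hproper : RA.Proper) :
    IsProperMap (fun p : Γ × H => (RA.act p.1 p.2, p.1)) := by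
  rw [isProperMap_iff_isCompact_preimage]
  exact ⟨(RA.continuous_act.prodMk continuous_fst), fun K hK => hproper K hK⟩

theorem act_inj (hfree : RA.Free) {z : Γ} {g g' : H} (h : RA.act z g = RA.act z g') : g = g' := by
  have : RA.act (RA.act z g) (g⁻¹ * g') = RA.act z g := by
    rw [RA.act_mul, h]; group
  have := hfree _ _ this
  have h2 : g * (g⁻¹ * g') = g * 1 := by rw [this]
  have h3 : g' = g := by simpa [mul_assoc] using h2
  exact h3.symm

/-- Hausdorffness of the quotient. -/
theorem t2_quot (hproper : RA.Proper) : T2Space (Quotient RA.setoid) := by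
  have hclosed : IsClosed (Set.range fun p : Γ × H => (RA.act p.1 p.2, p.1)) :=
    (isProperMap_E RA hproper).isClosedMap.isClosed_range
  rw [t2Space_iff]
  intro a b hab
  obtain ⟨x, rfl⟩ := Quotient.exists_rep a
  obtain ⟨y, rfl⟩ := Quotient.exists_rep b
  have hnm : (y, x) ∈ (Set.range fun p : Γ × H => (RA.act p.1 p.2, p.1))ᶜ := by
    intro hmem
    obtain ⟨⟨z, h⟩, hz⟩ := hmem
    simp only [Prod.mk.injEq] at hz
    obtain ⟨h1, h2⟩ := hz
    subst h2
    exact hab ((mk_eq_iff RA).mpr ⟨h, h1⟩)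
  obtain ⟨u, v, hu, hv, hyu, hxv, huv⟩ :=
    isOpen_prod_iff.mp hclosed.isOpen_compl y x hnm
  refine ⟨Quotient.mk RA.setoid '' v, Quotient.mk RA.setoid '' u,
    isOpenMap_mk RA v hv, isOpenMap_mk RA u hu, ⟨x, hxv, rfl⟩, ⟨y, hyu, rfl⟩, ?_⟩
  rw [Set.disjoint_left]
  rintro q ⟨c, hc, rfl⟩ ⟨d, hd, hdc⟩
  obtain ⟨h, rfl⟩ := (mk_eq_iff RA).mp hdc
  exact absurd ⟨(RA.act d h, h⁻¹), by simp [act_act_inv]⟩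
    (huv (Set.mk_mem_prod hd hc))

theorem wlc_quot : WeaklyLocallyCompactSpace (Quotient RA.setoid) := by
  constructor
  intro q
  obtain ⟨x, rfl⟩ := Quotient.exists_rep q
  obtain ⟨K, hK, hKx⟩ := exists_compact_mem_nhds x
  exact ⟨Quotient.mk RA.setoid '' K, hK.image (continuous_mk RA),
    (isOpenMap_mk RA).image_mem_nhds hKx⟩

theorem lc_quot (hproper : RA.Proper) : LocallyCompactSpace (Quotient RA.setoid) := by
  have := t2_quot RA hproper
  have := wlc_quot RA
  infer_instance

-- The translation function: for `(z, w)` in the orbit relation, the unique `g` with `z·g = w`.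
open scoped Classical in
noncomputable def tr (p : Γ × Γ) : H :=
  if h : ∃ g : H, RA.act p.1 g = p.2 then h.choose else 1

theorem tr_spec {p : Γ × Γ} (h : ∃ g : H, RA.act p.1 g = p.2) :
    RA.act p.1 (tr RA p) = p.2 := by
  rw [tr, dif_pos h]; exact h.choose_spec

theorem tr_eq (hfree : RA.Free) {z w : Γ} {g : H} (h : RA.act z g = w) : tr RA (z, w) = g :=
  act_inj RA hfree (by rw [tr_spec RA ⟨g, h⟩, h])

/-- Continuity of the translation function on the orbit relation. -/
theorem continuousOn_tr (hfree : RA.Free) (hproper : RA.Proper) :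
    ContinuousOn (tr RA) {p : Γ × Γ | ∃ g : H, RA.act p.1 g = p.2} := by
  set R : Set (Γ × Γ) := {p : Γ × Γ | ∃ g : H, RA.act p.1 g = p.2} with hR
  rintro ⟨z₀, w₀⟩ hp₀
  set g₀ : H := tr RA (z₀, w₀) with hg₀
  have hact₀ : RA.act z₀ g₀ = w₀ := tr_spec RA hp₀
  rw [ContinuousWithinAt, tendsto_nhds]
  intro V hVopen hV₀
  obtain ⟨K₁, hK₁, hK₁w⟩ := exists_compact_mem_nhds w₀
  obtain ⟨K₂, hK₂, hK₂z⟩ := exists_compact_mem_nhds z₀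
  set K : Set (Γ × Γ) := K₁ ×ˢ K₂ with hKdef
  have hKcomp : IsCompact K := hK₁.prod hK₂
  set L : Set (Γ × H) := {p : Γ × H | (RA.act p.1 p.2, p.1) ∈ K} with hLdef
  have hLcomp : IsCompact L := hproper K hKcomp
  set L' : Set (Γ × H) := L ∩ (Set.univ ×ˢ Vᶜ) with hL'def
  have hL'comp : IsCompact L' :=
    hLcomp.inter_right (isClosed_univ.prod hVopen.isClosed_compl)
  set M : Set (Γ × Γ) := (fun p : Γ × H => (RA.act p.1 p.2, p.1)) '' L' with hMdef
  have hMcomp : IsCompact M := hL'comp.image (RA.continuous_act.prodMk continuous_fst)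
  have hM : (w₀, z₀) ∉ M := by
    rintro ⟨⟨z, g⟩, ⟨-, hgV⟩, heq⟩
    simp only [Prod.mk.injEq] at heq
    obtain ⟨hzw, hzz⟩ := heq
    subst hzz
    exact hgV.2 (act_inj RA hfree (hzw.trans hact₀.symm) ▸ hV₀)
  set N : Set (Γ × Γ) := (interior K₁ ×ˢ interior K₂) ∩ Mᶜ with hNdef
  have hNopen : IsOpen N := ((isOpen_interior.prod isOpen_interior).inter hMcomp.isClosed.isOpen_compl)
  have hN₀ : (w₀, z₀) ∈ N :=
    ⟨⟨mem_interior_iff_mem_nhds.mpr hK₁w, mem_interior_iff_mem_nhds.mpr hK₂z⟩, hM⟩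
  set W : Set (Γ × Γ) := (fun p : Γ × Γ => (p.2, p.1)) ⁻¹' N with hWdef
  have hWopen : IsOpen W := hNopen.preimage (continuous_snd.prodMk continuous_fst)
  rw [mem_nhdsWithin]
  refine ⟨W, hWopen, by simpa [hWdef] using hN₀, ?_⟩
  rintro ⟨z, w⟩ ⟨hW, hRmem⟩
  have htr : RA.act z (tr RA (z, w)) = w := tr_spec RA hRmem
  simp only [hWdef, Set.mem_preimage] at hW
  have hL : (z, tr RA (z, w)) ∈ L := by
    simp only [hLdef, Set.mem_setOf_eq, htr]
    exact ⟨interior_subset hW.1.1, interior_subset hW.1.2⟩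
  by_contra hnV
  exact hW.2 ⟨(z, tr RA (z, w)), ⟨hL, ⟨trivial, hnV⟩⟩, by simp [htr]⟩

/-! ### The groupoid structure on the quotient -/

theorem rng_resp : ∀ a b : Γ, (RA.setoid).r a b →
    Quotient.mk RA.setoid (𝒢.rng a) = Quotient.mk RA.setoid (𝒢.rng b) := by
  rintro a b ⟨h, rfl⟩
  exact (mk_eq_iff RA).mpr ⟨h, (RA.rng_act a h).symm⟩

theorem src_resp : ∀ a b : Γ, (RA.setoid).r a b →
    Quotient.mk RA.setoid (𝒢.src a) = Quotient.mk RA.setoid (𝒢.src b) := by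
  rintro a b ⟨h, rfl⟩
  exact (mk_eq_iff RA).mpr ⟨h, (RA.src_act a h).symm⟩

theorem inv_resp : ∀ a b : Γ, (RA.setoid).r a b →
    Quotient.mk RA.setoid (𝒢.inv a) = Quotient.mk RA.setoid (𝒢.inv b) := by
  rintro a b ⟨h, rfl⟩
  exact (mk_eq_iff RA).mpr ⟨h, (RA.inv_act a h).symm⟩

noncomputable def Qrng : Quotient RA.setoid → Quotient RA.setoid :=
  Quotient.lift (fun x => Quotient.mk RA.setoid (𝒢.rng x)) (rng_resp RA)

noncomputable def Qsrc : Quotient RA.setoid → Quotient RA.setoid :=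
  Quotient.lift (fun x => Quotient.mk RA.setoid (𝒢.src x)) (src_resp RA)

noncomputable def Qinv : Quotient RA.setoid → Quotient RA.setoid :=
  Quotient.lift (fun x => Quotient.mk RA.setoid (𝒢.inv x)) (inv_resp RA)

@[simp] theorem Qrng_mk (x : Γ) :
    Qrng RA (Quotient.mk RA.setoid x) = Quotient.mk RA.setoid (𝒢.rng x) := rfl
@[simp] theorem Qsrc_mk (x : Γ) :
    Qsrc RA (Quotient.mk RA.setoid x) = Quotient.mk RA.setoid (𝒢.src x) := rfl
@[simp] theorem Qinv_mk (x : Γ) :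
    Qinv RA (Quotient.mk RA.setoid x) = Quotient.mk RA.setoid (𝒢.inv x) := rfl

open scoped Classical in
noncomputable def Qmul (a b : Quotient RA.setoid) : Quotient RA.setoid :=
  if h : ∃ z w : Γ, Quotient.mk RA.setoid z = a ∧ Quotient.mk RA.setoid w = b ∧
      𝒢.src z = 𝒢.rng w
  then Quotient.mk RA.setoid (𝒢.mul h.choose h.choose_spec.choose)
  else b

theorem mul_indep (hfree : RA.Free) {z z' w w' : Γ}
    (hz : Quotient.mk RA.setoid z = Quotient.mk RA.setoid z')
    (hw : Quotient.mk RA.setoid w = Quotient.mk RA.setoid w')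
    (hc : 𝒢.src z = 𝒢.rng w) (hc' : 𝒢.src z' = 𝒢.rng w') :
    Quotient.mk RA.setoid (𝒢.mul z w) = Quotient.mk RA.setoid (𝒢.mul z' w') := by
  obtain ⟨h, rfl⟩ := (mk_eq_iff RA).mp hz
  obtain ⟨k, rfl⟩ := (mk_eq_iff RA).mp hw
  have h1 : RA.act (𝒢.rng w) h = RA.act (𝒢.rng w) k := by
    have e1 : 𝒢.src (RA.act z h) = RA.act (𝒢.rng w) h := by rw [RA.src_act, hc]
    have e2 : 𝒢.rng (RA.act w k) = RA.act (𝒢.rng w) k := RA.rng_act w k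
    rw [← e1, ← e2, hc']
  have hk : k = h := (act_inj RA hfree h1).symm
  subst hk
  exact (mk_eq_iff RA).mpr ⟨k, (RA.mul_act z w k hc).symm⟩

theorem Qmul_mk (hfree : RA.Free) {x y : Γ} (h : 𝒢.src x = 𝒢.rng y) :
    Qmul RA (Quotient.mk RA.setoid x) (Quotient.mk RA.setoid y)
      = Quotient.mk RA.setoid (𝒢.mul x y) := by
  have hex : ∃ z w : Γ, Quotient.mk RA.setoid z = Quotient.mk RA.setoid x ∧
      Quotient.mk RA.setoid w = Quotient.mk RA.setoid y ∧ 𝒢.src z = 𝒢.rng w :=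
    ⟨x, y, rfl, rfl, h⟩
  unfold Qmul
  rw [dif_pos hex]
  obtain ⟨hz, hw, hc⟩ := hex.choose_spec.choose_spec
  exact mul_indep RA hfree hz hw hc h

/-- From `Qsrc ⟦x⟧ = Qrng ⟦y⟧` obtain a composable representative of `⟦x⟧`. -/
theorem comp_rep_left {x y : Γ}
    (h : Qsrc RA (Quotient.mk RA.setoid x) = Qrng RA (Quotient.mk RA.setoid y)) :
    ∃ x' : Γ, Quotient.mk RA.setoid x' = Quotient.mk RA.setoid x ∧ 𝒢.src x' = 𝒢.rng y := by
  obtain ⟨g, hg⟩ := (mk_eq_iff RA).mp h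
  refine ⟨RA.act x g, ((mk_eq_iff RA).mpr ⟨g⁻¹, act_act_inv RA x g⟩), ?_⟩
  rw [RA.src_act, hg]

theorem comp_rep_right {x y : Γ}
    (h : Qsrc RA (Quotient.mk RA.setoid x) = Qrng RA (Quotient.mk RA.setoid y)) :
    ∃ y' : Γ, Quotient.mk RA.setoid y' = Quotient.mk RA.setoid y ∧ 𝒢.src x = 𝒢.rng y' := by
  obtain ⟨g, hg⟩ := (mk_eq_iff RA).mp h
  refine ⟨RA.act y g⁻¹, ((mk_eq_iff RA).mpr ⟨g, by rw [RA.act_mul]; simp [RA.act_one]⟩), ?_⟩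
  rw [RA.rng_act, ← hg, RA.act_mul]
  simp [RA.act_one]

end QuotGpdConstr

namespace QuotGpdConstr

open Set Filter Topology

variable {Γ H : Type*} [TopologicalSpace Γ] [T2Space Γ] [LocallyCompactSpace Γ]
  [TopologicalSpace H] [Group H] [IsTopologicalGroup H] [T2Space H] [LocallyCompactSpace H]
  {𝒢 : TopGroupoid Γ} (RA : GroupRightAction 𝒢 H)

/-- The composable set upstairs (orbit-wise composability). -/
def SG (RA : GroupRightAction 𝒢 H) : Set (Γ × Γ) :=
  {p : Γ × Γ | ∃ g : H, RA.act (𝒢.src p.1) g = 𝒢.rng p.2}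

/-- A lift of the quotient multiplication to orbit-wise composable pairs. -/
noncomputable def mtil (p : Γ × Γ) : Quotient RA.setoid :=
  Quotient.mk RA.setoid (𝒢.mul (RA.act p.1 (tr RA (𝒢.src p.1, 𝒢.rng p.2))) p.2)

theorem compat {p : Γ × Γ} (hp : p ∈ SG RA) :
    𝒢.src (RA.act p.1 (tr RA (𝒢.src p.1, 𝒢.rng p.2))) = 𝒢.rng p.2 := by
  rw [RA.src_act]
  exact tr_spec RA (p := (𝒢.src p.1, 𝒢.rng p.2)) hp

theorem mtil_eq (hfree : RA.Free) {p : Γ × Γ} (hp : p ∈ SG RA) :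
    mtil RA p = Qmul RA (Quotient.mk RA.setoid p.1) (Quotient.mk RA.setoid p.2) := by
  have h1 : Quotient.mk RA.setoid (RA.act p.1 (tr RA (𝒢.src p.1, 𝒢.rng p.2)))
      = Quotient.mk RA.setoid p.1 :=
    (mk_eq_iff RA).mpr ⟨_, act_act_inv RA p.1 _⟩
  rw [← h1, Qmul_mk RA hfree (compat RA hp)]
  rfl

theorem continuousOn_mtil (hfree : RA.Free) (hproper : RA.Proper) :
    ContinuousOn (mtil RA) (SG RA) := by
  have htr : ContinuousOn (fun p : Γ × Γ => tr RA (𝒢.src p.1, 𝒢.rng p.2)) (SG RA) := by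
    have hmap : Set.MapsTo (fun p : Γ × Γ => (𝒢.src p.1, 𝒢.rng p.2)) (SG RA)
        {q : Γ × Γ | ∃ g : H, RA.act q.1 g = q.2} := fun p hp => hp
    exact (continuousOn_tr RA hfree hproper).comp
      (((𝒢.continuous_src.comp continuous_fst).prodMk
        (𝒢.continuous_rng.comp continuous_snd)).continuousOn) hmap
  have h1 : ContinuousOn
      (fun p : Γ × Γ => (RA.act p.1 (tr RA (𝒢.src p.1, 𝒢.rng p.2)), p.2)) (SG RA) :=
    (RA.continuous_act.comp_continuousOn (continuousOn_fst.prodMk htr)).prodMk continuousOn_snd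
  have hmaps : Set.MapsTo
      (fun p : Γ × Γ => (RA.act p.1 (tr RA (𝒢.src p.1, 𝒢.rng p.2)), p.2)) (SG RA)
      {q : Γ × Γ | 𝒢.src q.1 = 𝒢.rng q.2} := fun p hp => compat RA hp
  exact (continuous_mk RA).comp_continuousOn (𝒢.continuous_mul.comp h1 hmaps)

theorem continuousOn_Qmul (hfree : RA.Free) (hproper : RA.Proper) :
    ContinuousOn (fun p : Quotient RA.setoid × Quotient RA.setoid => Qmul RA p.1 p.2)
      {p : Quotient RA.setoid × Quotient RA.setoid | Qsrc RA p.1 = Qrng RA p.2} := by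
  rintro ⟨a, b⟩ hab
  obtain ⟨x, rfl⟩ := Quotient.exists_rep a
  obtain ⟨y, rfl⟩ := Quotient.exists_rep b
  have hxy : (x, y) ∈ SG RA := (mk_eq_iff RA).mp hab
  rw [ContinuousWithinAt]
  intro N hN
  have hm₀ : mtil RA (x, y) = Qmul RA (Quotient.mk RA.setoid x) (Quotient.mk RA.setoid y) :=
    mtil_eq RA hfree hxy
  have hpre : mtil RA ⁻¹' N ∈ 𝓝[SG RA] (x, y) :=
    (continuousOn_mtil RA hfree hproper (x, y) hxy) (hm₀ ▸ hN)
  obtain ⟨O, hOopen, hO₀, hOsub⟩ := mem_nhdsWithin.mp hpre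
  rw [mem_map, mem_nhdsWithin]
  refine ⟨Prod.map (Quotient.mk RA.setoid) (Quotient.mk RA.setoid) '' O,
    ((isOpenMap_mk RA).prodMap (isOpenMap_mk RA)) O hOopen, ⟨(x, y), hO₀, rfl⟩, ?_⟩
  rintro ⟨c, d⟩ ⟨⟨⟨u, v⟩, huvO, huv⟩, hcd⟩
  obtain ⟨h1, h2⟩ := Prod.ext_iff.mp huv
  simp only [Prod.map] at h1 h2
  subst h1
  subst h2
  have huvSG : (u, v) ∈ SG RA := (mk_eq_iff RA).mp hcd
  show Qmul RA (Quotient.mk RA.setoid u) (Quotient.mk RA.setoid v) ∈ N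
  rw [← mtil_eq RA hfree huvSG]
  exact hOsub ⟨huvO, huvSG⟩

/-- The quotient groupoid. -/
noncomputable def Qgpd (hfree : RA.Free) (hproper : RA.Proper) :
    TopGroupoid (Quotient RA.setoid) where
  unit := Quotient.mk RA.setoid '' 𝒢.unit
  rng := Qrng RA
  src := Qsrc RA
  mul := Qmul RA
  inv := Qinv RA
  rng_mem := by
    intro a
    obtain ⟨x, rfl⟩ := Quotient.exists_rep a
    exact ⟨𝒢.rng x, 𝒢.rng_mem x, rfl⟩
  src_mem := by
    intro a
    obtain ⟨x, rfl⟩ := Quotient.exists_rep a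
    exact ⟨𝒢.src x, 𝒢.src_mem x, rfl⟩
  rng_unit := by
    rintro q ⟨u, hu, rfl⟩
    rw [Qrng_mk, 𝒢.rng_unit u hu]
  src_unit := by
    rintro q ⟨u, hu, rfl⟩
    rw [Qsrc_mk, 𝒢.src_unit u hu]
  continuous_rng := by
    rw [(isQuotientMap_mk RA).continuous_iff]
    exact (continuous_mk RA).comp 𝒢.continuous_rng
  continuous_src := by
    rw [(isQuotientMap_mk RA).continuous_iff]
    exact (continuous_mk RA).comp 𝒢.continuous_src
  open_rng := by
    intro U hU
    obtain ⟨V, hV, hVeq⟩ :=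
      𝒢.open_rng (Quotient.mk RA.setoid ⁻¹' U) (hU.preimage (continuous_mk RA))
    refine ⟨Quotient.mk RA.setoid '' V, isOpenMap_mk RA V hV, ?_⟩
    ext q
    constructor
    · rintro ⟨a, haU, rfl⟩
      obtain ⟨x, rfl⟩ := Quotient.exists_rep a
      have hx : 𝒢.rng x ∈ V ∩ 𝒢.unit := by rw [← hVeq]; exact ⟨x, haU, rfl⟩
      exact ⟨⟨𝒢.rng x, hx.1, rfl⟩, ⟨𝒢.rng x, hx.2, rfl⟩⟩
    · rintro ⟨⟨v, hv, hqv⟩, ⟨u, hu, hqu⟩⟩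
      obtain ⟨h, rfl⟩ := (mk_eq_iff RA).mp (hqu.trans hqv.symm)
      have hvu : RA.act u h ∈ 𝒢.rng '' (Quotient.mk RA.setoid ⁻¹' U) := by
        rw [hVeq]; exact ⟨hv, RA.unit_act u hu h⟩
      obtain ⟨x, hxU, hrx⟩ := hvu
      refine ⟨Quotient.mk RA.setoid x, hxU, ?_⟩
      rw [Qrng_mk, hrx]
      exact hqv
  open_src := by
    intro U hU
    obtain ⟨V, hV, hVeq⟩ :=
      𝒢.open_src (Quotient.mk RA.setoid ⁻¹' U) (hU.preimage (continuous_mk RA))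
    refine ⟨Quotient.mk RA.setoid '' V, isOpenMap_mk RA V hV, ?_⟩
    ext q
    constructor
    · rintro ⟨a, haU, rfl⟩
      obtain ⟨x, rfl⟩ := Quotient.exists_rep a
      have hx : 𝒢.src x ∈ V ∩ 𝒢.unit := by rw [← hVeq]; exact ⟨x, haU, rfl⟩
      exact ⟨⟨𝒢.src x, hx.1, rfl⟩, ⟨𝒢.src x, hx.2, rfl⟩⟩
    · rintro ⟨⟨v, hv, hqv⟩, ⟨u, hu, hqu⟩⟩
      obtain ⟨h, rfl⟩ := (mk_eq_iff RA).mp (hqu.trans hqv.symm)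
      have hvu : RA.act u h ∈ 𝒢.src '' (Quotient.mk RA.setoid ⁻¹' U) := by
        rw [hVeq]; exact ⟨hv, RA.unit_act u hu h⟩
      obtain ⟨x, hxU, hrx⟩ := hvu
      refine ⟨Quotient.mk RA.setoid x, hxU, ?_⟩
      rw [Qsrc_mk, hrx]
      exact hqv
  continuous_mul := continuousOn_Qmul RA hfree hproper
  continuous_inv := by
    rw [(isQuotientMap_mk RA).continuous_iff]
    exact (continuous_mk RA).comp 𝒢.continuous_inv
  rng_mul := by
    intro a b hab
    obtain ⟨x, rfl⟩ := Quotient.exists_rep a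
    obtain ⟨y, rfl⟩ := Quotient.exists_rep b
    obtain ⟨x', hx'e, hx'c⟩ := comp_rep_left RA hab
    rw [← hx'e, Qmul_mk RA hfree hx'c, Qrng_mk, Qrng_mk, 𝒢.rng_mul x' y hx'c]
  src_mul := by
    intro a b hab
    obtain ⟨x, rfl⟩ := Quotient.exists_rep a
    obtain ⟨y, rfl⟩ := Quotient.exists_rep b
    obtain ⟨y', hy'e, hy'c⟩ := comp_rep_right RA hab
    rw [← hy'e, Qmul_mk RA hfree hy'c, Qsrc_mk, Qsrc_mk, 𝒢.src_mul x y' hy'c]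
  mul_assoc' := by
    intro a b c hab hbc
    obtain ⟨x, rfl⟩ := Quotient.exists_rep a
    obtain ⟨y, rfl⟩ := Quotient.exists_rep b
    obtain ⟨z, rfl⟩ := Quotient.exists_rep c
    obtain ⟨x', hx'e, hx'c⟩ := comp_rep_left RA hab
    obtain ⟨z', hz'e, hz'c⟩ := comp_rep_right RA hbc
    rw [← hx'e, ← hz'e, Qmul_mk RA hfree hx'c, Qmul_mk RA hfree hz'c,
      Qmul_mk RA hfree (by rw [𝒢.src_mul x' y hx'c]; exact hz'c),
      Qmul_mk RA hfree (by rw [𝒢.rng_mul y z' hz'c]; exact hx'c)]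
    exact congrArg _ (𝒢.mul_assoc' x' y z' hx'c hz'c)
  rng_mul_self := by
    intro a
    obtain ⟨x, rfl⟩ := Quotient.exists_rep a
    rw [Qrng_mk, Qmul_mk RA hfree (𝒢.src_unit _ (𝒢.rng_mem x)), 𝒢.rng_mul_self]
  mul_src_self := by
    intro a
    obtain ⟨x, rfl⟩ := Quotient.exists_rep a
    rw [Qsrc_mk, Qmul_mk RA hfree (𝒢.rng_unit _ (𝒢.src_mem x)).symm, 𝒢.mul_src_self]
  inv_inv' := by
    intro a
    obtain ⟨x, rfl⟩ := Quotient.exists_rep a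
    rw [Qinv_mk, Qinv_mk, 𝒢.inv_inv']
  src_inv := by
    intro a
    obtain ⟨x, rfl⟩ := Quotient.exists_rep a
    rw [Qinv_mk, Qsrc_mk, Qrng_mk, 𝒢.src_inv]
  rng_inv := by
    intro a
    obtain ⟨x, rfl⟩ := Quotient.exists_rep a
    rw [Qinv_mk, Qrng_mk, Qsrc_mk, 𝒢.rng_inv]
  inv_mul' := by
    intro a
    obtain ⟨x, rfl⟩ := Quotient.exists_rep a
    rw [Qinv_mk, Qmul_mk RA hfree (𝒢.src_inv x), 𝒢.inv_mul', Qsrc_mk]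
  mul_inv' := by
    intro a
    obtain ⟨x, rfl⟩ := Quotient.exists_rep a
    rw [Qinv_mk, Qmul_mk RA hfree (𝒢.rng_inv x).symm, 𝒢.mul_inv', Qrng_mk]

end QuotGpdConstr

/-- If `H` acts freely and properly on the right of a topological groupoid
`Γ` by automorphisms, then the orbit space `Γ/H` is locally compact Hausdorff and carries a
topological groupoid structure with units `Γ⁰/H`, `r(xH) = r(x)H`, `s(xH) = s(x)H`,
`(xH)(yH) = (xy)H` whenever `s(x) = r(y)`, and `(xH)⁻¹ = x⁻¹H`. -/
theorem quotient_groupoid_exists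
    {Γ H : Type*} [TopologicalSpace Γ] [T2Space Γ] [LocallyCompactSpace Γ]
    [TopologicalSpace H] [Group H] [IsTopologicalGroup H] [T2Space H] [LocallyCompactSpace H]
    (𝒢 : TopGroupoid Γ) (RA : GroupRightAction 𝒢 H)
    (hfree : RA.Free) (hproper : RA.Proper) :
    T2Space (Quotient RA.setoid) ∧ LocallyCompactSpace (Quotient RA.setoid) ∧
    ∃ Q : TopGroupoid (Quotient RA.setoid),
      Q.unit = Quotient.mk RA.setoid '' 𝒢.unit ∧
      (∀ x : Γ, Q.rng (Quotient.mk RA.setoid x) = Quotient.mk RA.setoid (𝒢.rng x)) ∧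
      (∀ x : Γ, Q.src (Quotient.mk RA.setoid x) = Quotient.mk RA.setoid (𝒢.src x)) ∧
      (∀ x y : Γ, 𝒢.src x = 𝒢.rng y →
        Q.mul (Quotient.mk RA.setoid x) (Quotient.mk RA.setoid y)
          = Quotient.mk RA.setoid (𝒢.mul x y)) ∧
      (∀ x : Γ, Q.inv (Quotient.mk RA.setoid x) = Quotient.mk RA.setoid (𝒢.inv x)) :=
  ⟨QuotGpdConstr.t2_quot RA hproper, QuotGpdConstr.lc_quot RA hproper,
    QuotGpdConstr.Qgpd RA hfree hproper, rfl, fun _ => rfl, fun _ => rfl,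
    fun _ _ h => QuotGpdConstr.Qmul_mk RA hfree h, fun _ => rfl⟩
end

section
/- Let H be a locally compact Hausdorff topological group acting freely and properly on the right of a topological groupoid Γ by automorphisms, and let {λᵘ}_{u ∈ Γ⁰} be a left Haar system on Γ that is H-invariant, meaning ∫ f(x·h) dλᵘ(x) = ∫ f(x) dλ^{u·h}(x) for all f ∈ C_c(Γ), u ∈ Γ⁰, h ∈ H. Then the formula ∫_{Γ/H} f(xH) dλ̇^{uH}(xH) = ∫_Γ f(xH) dλᵘ(x), for f ∈ C_c(Γ/H), is independent of the choice of representative u of the orbit uH, and the resulting family {λ̇^{uH}}_{uH ∈ Γ⁰/H} is a left Haar system on the quotient groupoid Γ/H. -/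
open MeasureTheory Filter Topology

section Aux
variable {Γ H : Type*} [TopologicalSpace Γ] [TopologicalSpace H] [Group H]
  {𝒢 : TopGroupoid Γ} (RA : GroupRightAction 𝒢 H)

theorem qmk_eq_iff {x y : Γ} :
    Quotient.mk RA.setoid x = Quotient.mk RA.setoid y ↔ ∃ h : H, RA.act x h = y :=
  ⟨fun h => Quotient.exact h, fun h => Quotient.sound h⟩

theorem qmk_act (x : Γ) (h : H) :
    Quotient.mk RA.setoid (RA.act x h) = Quotient.mk RA.setoid x :=
  (qmk_eq_iff RA).mpr ⟨h⁻¹, by rw [RA.act_mul]; simp [RA.act_one]⟩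

theorem continuous_qmk : Continuous (Quotient.mk RA.setoid) := continuous_quotient_mk'

theorem continuous_act_right (h : H) : Continuous fun x : Γ => RA.act x h :=
  RA.continuous_act.comp (continuous_id.prodMk continuous_const)

theorem isOpenMap_qmk : IsOpenMap (Quotient.mk RA.setoid) := by
  intro U hU
  have : Quotient.mk RA.setoid ⁻¹' (Quotient.mk RA.setoid '' U)
      = ⋃ h : H, (fun x : Γ => RA.act x h) ⁻¹' U := by
    ext x
    simp only [Set.mem_preimage, Set.mem_image, Set.mem_iUnion]
    constructor
    · rintro ⟨y, hyU, hxy⟩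
      obtain ⟨h, rfl⟩ := (qmk_eq_iff RA).mp hxy
      exact ⟨h⁻¹, by rw [RA.act_mul]; simpa [RA.act_one] using hyU⟩
    · rintro ⟨h, hh⟩
      exact ⟨RA.act x h, hh, qmk_act RA x h⟩
  refine isQuotientMap_quotient_mk'.isOpen_preimage.mp ?_
  show IsOpen (Quotient.mk RA.setoid ⁻¹' (Quotient.mk RA.setoid '' U))
  rw [this]
  exact isOpen_iUnion fun h => hU.preimage (continuous_act_right RA h)


theorem t2_quot [T2Space Γ] [LocallyCompactSpace Γ] (hproper : RA.Proper) :
    T2Space (Quotient RA.setoid) := by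
  have hF : IsProperMap (fun p : Γ × H => (RA.act p.1 p.2, p.1)) := by
    refine isProperMap_iff_isCompact_preimage.mpr ⟨?_, fun K hK => hproper K hK⟩
    exact RA.continuous_act.prodMk continuous_fst
  have hR : IsClosed (Set.range fun p : Γ × H => (RA.act p.1 p.2, p.1)) :=
    hF.isClosedMap.isClosed_range
  constructor
  intro z w hzw
  obtain ⟨a, rfl⟩ := Quotient.exists_rep z
  obtain ⟨b, rfl⟩ := Quotient.exists_rep w
  have hba : (b, a) ∈ (Set.range fun p : Γ × H => (RA.act p.1 p.2, p.1))ᶜ := by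
    intro hmem
    obtain ⟨⟨c, h⟩, hc⟩ := hmem
    have h1 : RA.act c h = b := congrArg Prod.fst hc
    have h2 : c = a := congrArg Prod.snd hc
    exact hzw (by rw [← h1, ← h2, qmk_act])
  obtain ⟨U, V, hUo, hVo, hbU, haV, hUV⟩ :=
    isOpen_prod_iff.mp hR.isOpen_compl b a hba
  refine ⟨Quotient.mk RA.setoid '' V, Quotient.mk RA.setoid '' U,
    isOpenMap_qmk RA V hVo, isOpenMap_qmk RA U hUo, ⟨a, haV, rfl⟩, ⟨b, hbU, rfl⟩, ?_⟩
  rw [Set.disjoint_left]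
  rintro q ⟨c1, hc1V, hq1⟩ ⟨c2, hc2U, hq2⟩
  obtain ⟨h, rfl⟩ := (qmk_eq_iff RA).mp (hq1.trans hq2.symm)
  have : (RA.act c1 h, c1) ∈ U ×ˢ V := ⟨hc2U, hc1V⟩
  exact hUV this (Set.mem_range_self (c1, h))


theorem isCompact_sat [T2Space Γ] [LocallyCompactSpace Γ] [IsTopologicalGroup H] (hproper : RA.Proper)
    {N : Set Γ} (hN : IsCompact N) {K : Set (Quotient RA.setoid)} (hK : IsCompact K) :
    IsCompact {x : Γ | 𝒢.rng x ∈ N ∧ Quotient.mk RA.setoid x ∈ K} := by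
  haveI : T2Space (Quotient RA.setoid) := t2_quot RA hproper
  -- find a compact set L with K ⊆ mk '' L
  obtain ⟨t, _, hcov⟩ := hK.elim_nhds_subcover
    (fun z => Quotient.mk RA.setoid '' interior (Classical.choose (exists_compact_mem_nhds
      (Quotient.out z))))
    (by
      intro z hz
      set M := Classical.choose (exists_compact_mem_nhds (Quotient.out z)) with hM
      obtain ⟨hMc, hMn⟩ := Classical.choose_spec (exists_compact_mem_nhds (Quotient.out z))
      refine IsOpen.mem_nhds (isOpenMap_qmk RA _ isOpen_interior) ?_
      exact ⟨Quotient.out z, mem_interior_iff_mem_nhds.mpr hMn, Quotient.out_eq z⟩)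
  set L : Set Γ := ⋃ z ∈ t, Classical.choose (exists_compact_mem_nhds (Quotient.out z)) with hL
  have hLc : IsCompact L :=
    t.isCompact_biUnion fun z _ =>
      (Classical.choose_spec (exists_compact_mem_nhds (Quotient.out z))).1
  have hKL : K ⊆ Quotient.mk RA.setoid '' L := by
    refine hcov.trans ?_
    intro z hz
    simp only [Set.mem_iUnion] at hz
    obtain ⟨w, hw, hz⟩ := hz
    obtain ⟨x, hx, rfl⟩ := hz
    exact ⟨x, Set.mem_biUnion hw (interior_subset hx), rfl⟩
  -- compact set of group elements
  set T := {p : Γ × H | (RA.act p.1 p.2, p.1) ∈ (𝒢.rng '' L) ×ˢ N} with hT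
  have hTc : IsCompact T := hproper _ ((hLc.image 𝒢.continuous_rng).prod hN)
  set H' : Set H := Prod.snd '' T with hH'
  have hH'c : IsCompact H' := hTc.image continuous_snd
  have hH'i : IsCompact (Inv.inv '' H') := hH'c.image continuous_inv
  set D := (fun p : Γ × H => RA.act p.1 p.2) '' (L ×ˢ (Inv.inv '' H')) with hD
  have hDc : IsCompact D := (hLc.prod hH'i).image RA.continuous_act
  refine IsCompact.of_isClosed_subset hDc ?_ ?_
  · have : {x : Γ | 𝒢.rng x ∈ N ∧ Quotient.mk RA.setoid x ∈ K}
        = 𝒢.rng ⁻¹' N ∩ Quotient.mk RA.setoid ⁻¹' K := rfl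
    rw [this]
    exact ((hN.isClosed.preimage 𝒢.continuous_rng).inter
      (hK.isClosed.preimage (continuous_qmk RA)))
  · rintro x ⟨hxN, hxK⟩
    obtain ⟨l, hlL, hlx⟩ := hKL hxK
    obtain ⟨h, rfl⟩ := (qmk_eq_iff RA).mp hlx
    have hmem : (𝒢.rng (RA.act l h), h⁻¹) ∈ T := by
      constructor
      · show RA.act (𝒢.rng (RA.act l h)) h⁻¹ ∈ 𝒢.rng '' L
        rw [← RA.rng_act, RA.act_mul]
        simp only [mul_inv_cancel, RA.act_one]
        exact ⟨l, hlL, rfl⟩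
      · exact hxN
    exact ⟨(l, h), ⟨hlL, ⟨h⁻¹, ⟨_, hmem, rfl⟩, inv_inv h⟩⟩, rfl⟩

theorem exists_bump [T2Space Γ] [LocallyCompactSpace Γ] {C : Set Γ} (hC : IsCompact C) :
    ∃ χ : Γ → ℝ, Continuous χ ∧ HasCompactSupport χ ∧ Set.EqOn χ 1 C := by
  obtain ⟨f, hf1, _, hfc, _⟩ :=
    exists_continuous_one_zero_of_isCompact hC isClosed_empty (Set.disjoint_empty C)
  exact ⟨f, f.continuous, hfc, hf1⟩


section Meas
variable [MeasurableSpace Γ] (lam : Γ → Measure Γ)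

theorem ae_rng (hnull : ∀ u ∈ 𝒢.unit, lam u {x | 𝒢.rng x ≠ u} = 0)
    {u : Γ} (hu : u ∈ 𝒢.unit) : ∀ᵐ x ∂(lam u), 𝒢.rng x = u := by
  rw [MeasureTheory.ae_iff]
  exact hnull u hu

theorem integral_fiber_congr (hnull : ∀ u ∈ 𝒢.unit, lam u {x | 𝒢.rng x ≠ u} = 0)
    {u : Γ} (hu : u ∈ 𝒢.unit) {g₁ g₂ : Γ → ℝ}
    (h : ∀ x, 𝒢.rng x = u → g₁ x = g₂ x) :
    ∫ x, g₁ x ∂(lam u) = ∫ x, g₂ x ∂(lam u) :=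
  MeasureTheory.integral_congr_ae ((ae_rng lam hnull hu).mono fun x hx => h x hx)

theorem integral_mk_indep [T2Space Γ] [LocallyCompactSpace Γ] [IsTopologicalGroup H]
    (hproper : RA.Proper)
    (hnull : ∀ u ∈ 𝒢.unit, lam u {x | 𝒢.rng x ≠ u} = 0)
    (hinvariant : ∀ u ∈ 𝒢.unit, ∀ h : H, ∀ f : Γ → ℝ, Continuous f → HasCompactSupport f →
      ∫ x, f (RA.act x h) ∂(lam u) = ∫ x, f x ∂(lam (RA.act u h)))
    {u v : Γ} (hu : u ∈ 𝒢.unit) (h : H) (hvu : RA.act u h = v)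
    (f : Quotient RA.setoid → ℝ) (hfc : Continuous f) (hfs : HasCompactSupport f) :
    ∫ x, f (Quotient.mk RA.setoid x) ∂(lam u)
      = ∫ x, f (Quotient.mk RA.setoid x) ∂(lam v) := by
  have hv : v ∈ 𝒢.unit := hvu ▸ RA.unit_act u hu h
  -- compact set where cutoff must be 1
  have hC : IsCompact {x : Γ | 𝒢.rng x ∈ ({v} : Set Γ) ∧
      Quotient.mk RA.setoid x ∈ tsupport f} :=
    isCompact_sat RA hproper isCompact_singleton hfs
  obtain ⟨χ, hχc, hχs, hχ1⟩ := exists_bump hC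
  set g : Γ → ℝ := fun x => f (Quotient.mk RA.setoid x) * χ x with hg
  have hgc : Continuous g := (hfc.comp (continuous_qmk RA)).mul hχc
  have hgs : HasCompactSupport g := by
    apply HasCompactSupport.mul_left hχs
  have key := hinvariant u hu h g hgc hgs
  rw [hvu] at key
  have hL : ∫ x, g (RA.act x h) ∂(lam u) = ∫ x, f (Quotient.mk RA.setoid x) ∂(lam u) := by
    refine integral_fiber_congr lam hnull hu fun x hx => ?_
    by_cases hmem : Quotient.mk RA.setoid x ∈ tsupport f
    · have hxC : RA.act x h ∈ {x : Γ | 𝒢.rng x ∈ ({v} : Set Γ) ∧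
          Quotient.mk RA.setoid x ∈ tsupport f} := by
        refine ⟨?_, by rwa [qmk_act]⟩
        rw [RA.rng_act, hx, hvu]
        exact rfl
      simp only [hg, qmk_act, hχ1 hxC, Pi.one_apply, mul_one]
    · have h0 : f (Quotient.mk RA.setoid x) = 0 := image_eq_zero_of_notMem_tsupport hmem
      simp only [hg, qmk_act, h0, zero_mul]
  have hR : ∫ x, g x ∂(lam v) = ∫ x, f (Quotient.mk RA.setoid x) ∂(lam v) := by
    refine integral_fiber_congr lam hnull hv fun x hx => ?_
    by_cases hmem : Quotient.mk RA.setoid x ∈ tsupport f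
    · have hxC : x ∈ {x : Γ | 𝒢.rng x ∈ ({v} : Set Γ) ∧
          Quotient.mk RA.setoid x ∈ tsupport f} := ⟨hx, hmem⟩
      simp only [hg, hχ1 hxC, Pi.one_apply, mul_one]
    · have h0 : f (Quotient.mk RA.setoid x) = 0 := image_eq_zero_of_notMem_tsupport hmem
      simp only [hg, h0, zero_mul]
  rw [← hL, key, hR]

end Meas
end Aux

/-- An `H`-invariant left Haar system on `Γ` descends to a left Haar
system on the quotient groupoid `Γ/H`, via
`∫_{Γ/H} f(xH) dλ̇^{uH}(xH) = ∫_Γ f(xH) dλᵘ(x)`. -/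
theorem quotient_groupoid_haar_system
    {Γ H : Type*} [TopologicalSpace Γ] [T2Space Γ] [LocallyCompactSpace Γ]
    [MeasurableSpace Γ] [BorelSpace Γ]
    [TopologicalSpace H] [Group H] [IsTopologicalGroup H] [T2Space H] [LocallyCompactSpace H]
    (𝒢 : TopGroupoid Γ) (RA : GroupRightAction 𝒢 H)
    (hfree : RA.Free) (hproper : RA.Proper)
    (lam : Γ → MeasureTheory.Measure Γ) (hHaar : IsHaarSystem 𝒢 lam)
    (hinvariant : ∀ u ∈ 𝒢.unit, ∀ h : H, ∀ f : Γ → ℝ, Continuous f → HasCompactSupport f →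
      ∫ x, f (RA.act x h) ∂(lam u) = ∫ x, f x ∂(lam (RA.act u h)))
    (Q : TopGroupoid (Quotient RA.setoid))
    (hQunit : Q.unit = Quotient.mk RA.setoid '' 𝒢.unit)
    (hQrng : ∀ x : Γ, Q.rng (Quotient.mk RA.setoid x) = Quotient.mk RA.setoid (𝒢.rng x))
    (hQsrc : ∀ x : Γ, Q.src (Quotient.mk RA.setoid x) = Quotient.mk RA.setoid (𝒢.src x))
    (hQmul : ∀ x y : Γ, 𝒢.src x = 𝒢.rng y →
      Q.mul (Quotient.mk RA.setoid x) (Quotient.mk RA.setoid y)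
        = Quotient.mk RA.setoid (𝒢.mul x y))
    (hQinv : ∀ x : Γ, Q.inv (Quotient.mk RA.setoid x) = Quotient.mk RA.setoid (𝒢.inv x)) :
    ∃ lamQ : Quotient RA.setoid → MeasureTheory.Measure (Quotient RA.setoid),
      (∀ u ∈ 𝒢.unit, ∀ f : Quotient RA.setoid → ℝ, Continuous f → HasCompactSupport f →
        ∫ z, f z ∂(lamQ (Quotient.mk RA.setoid u))
          = ∫ x, f (Quotient.mk RA.setoid x) ∂(lam u)) ∧
      IsHaarSystem Q lamQ := by
  classical
  obtain ⟨hfin, hnull, hpos, hcont, hinvL⟩ := hHaar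
  haveI hT2 : T2Space (Quotient RA.setoid) := t2_quot RA hproper
  haveI : OpensMeasurableSpace (Quotient RA.setoid) :=
    ⟨MeasurableSpace.generateFrom_le fun U hU =>
      measurableSet_quotient.mpr ((hU.preimage (continuous_qmk RA)).measurableSet)⟩
  have hmkm : Measurable (Quotient.mk RA.setoid) := measurable_quotient_mk''
  set lamQ : Quotient RA.setoid → Measure (Quotient RA.setoid) :=
    fun z => (lam (Quotient.out z)).map (Quotient.mk RA.setoid) with hlamQdef
  have hout : ∀ u : Γ, ∃ h : H, RA.act (Quotient.out (Quotient.mk RA.setoid u)) h = u :=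
    fun u => (qmk_eq_iff RA).mp (Quotient.out_eq (Quotient.mk RA.setoid u))
  have hunit_of_eq : ∀ {w x : Γ}, w ∈ 𝒢.unit →
      Quotient.mk RA.setoid w = Quotient.mk RA.setoid x → x ∈ 𝒢.unit := by
    intro w x hw hwx
    obtain ⟨h, rfl⟩ := (qmk_eq_iff RA).mp hwx
    exact RA.unit_act w hw h
  have hout_unit : ∀ u ∈ 𝒢.unit, Quotient.out (Quotient.mk RA.setoid u) ∈ 𝒢.unit :=
    fun u hu => hunit_of_eq hu (Quotient.out_eq (Quotient.mk RA.setoid u)).symm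
  have hQmem : ∀ z ∈ Q.unit, ∃ w ∈ 𝒢.unit, Quotient.mk RA.setoid w = z := by
    intro z hz
    rw [hQunit] at hz
    obtain ⟨w, hw, rfl⟩ := hz
    exact ⟨w, hw, rfl⟩
  have key1 : ∀ u ∈ 𝒢.unit, ∀ f : Quotient RA.setoid → ℝ, Continuous f →
      HasCompactSupport f →
      ∫ z, f z ∂(lamQ (Quotient.mk RA.setoid u))
        = ∫ x, f (Quotient.mk RA.setoid x) ∂(lam u) := by
    intro u hu f hfc hfs
    rw [hlamQdef]
    rw [MeasureTheory.integral_map hmkm.aemeasurable hfc.aestronglyMeasurable]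
    obtain ⟨h, hh⟩ := hout u
    exact integral_mk_indep RA lam hproper hnull hinvariant (hout_unit u hu) h hh f hfc hfs
  have c2 : ∀ w ∈ 𝒢.unit, lamQ (Quotient.mk RA.setoid w)
      {q | Q.rng q ≠ Quotient.mk RA.setoid w} = 0 := by
    intro w hw
    have hSm : MeasurableSet {q : Quotient RA.setoid | Q.rng q ≠ Quotient.mk RA.setoid w} := by
      have : {q : Quotient RA.setoid | Q.rng q ≠ Quotient.mk RA.setoid w}
          = Q.rng ⁻¹' ({Quotient.mk RA.setoid w}ᶜ) := rfl
      rw [this]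
      exact (isClosed_singleton.isOpen_compl.preimage Q.continuous_rng).measurableSet
    rw [hlamQdef]
    rw [Measure.map_apply hmkm hSm]
    refine measure_mono_null ?_ (hnull _ (hout_unit w hw))
    intro x hx
    simp only [Set.mem_preimage, Set.mem_setOf_eq] at hx ⊢
    intro heq
    apply hx
    rw [hQrng, heq, Quotient.out_eq]
  refine ⟨lamQ, key1, ?_, ?_, ?_, ?_, ?_⟩
  · -- finiteness on compacts
    intro z hz K hK
    obtain ⟨w, hw, rfl⟩ := hQmem z hz
    have hw' := hout_unit w hw
    have hKm : MeasurableSet K := hK.isClosed.measurableSet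
    rw [hlamQdef, Measure.map_apply hmkm hKm]
    set w' := Quotient.out (Quotient.mk RA.setoid w)
    have hCc : IsCompact {x : Γ | 𝒢.rng x ∈ ({w'} : Set Γ) ∧ Quotient.mk RA.setoid x ∈ K} :=
      isCompact_sat RA hproper isCompact_singleton hK
    calc lam w' (Quotient.mk RA.setoid ⁻¹' K)
        ≤ lam w' ({x : Γ | 𝒢.rng x ∈ ({w'} : Set Γ) ∧ Quotient.mk RA.setoid x ∈ K}
            ∪ {x | 𝒢.rng x ≠ w'}) := by
          refine measure_mono fun x hx => ?_
          by_cases hrx : 𝒢.rng x = w'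
          · exact Or.inl ⟨hrx, hx⟩
          · exact Or.inr hrx
      _ ≤ lam w' {x : Γ | 𝒢.rng x ∈ ({w'} : Set Γ) ∧ Quotient.mk RA.setoid x ∈ K}
            + lam w' {x | 𝒢.rng x ≠ w'} := measure_union_le _ _
      _ = lam w' {x : Γ | 𝒢.rng x ∈ ({w'} : Set Γ) ∧ Quotient.mk RA.setoid x ∈ K} := by
          rw [hnull w' hw', add_zero]
      _ < ⊤ := hfin w' hw' _ hCc
  · -- null off fibre
    intro z hz
    obtain ⟨w, hw, rfl⟩ := hQmem z hz
    exact c2 w hw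
  · -- positivity
    intro z hz V hV hne
    obtain ⟨w, hw, rfl⟩ := hQmem z hz
    have hw' := hout_unit w hw
    rw [hlamQdef, Measure.map_apply hmkm hV.measurableSet]
    refine hpos _ hw' _ (hV.preimage (continuous_qmk RA)) ?_
    obtain ⟨q, hqV, hqr⟩ := hne
    obtain ⟨y, rfl⟩ := Quotient.exists_rep q
    have hry : Q.rng (Quotient.mk RA.setoid y) = Quotient.mk RA.setoid w := hqr
    rw [hQrng] at hry
    have : Quotient.mk RA.setoid (𝒢.rng y)
        = Quotient.mk RA.setoid (Quotient.out (Quotient.mk RA.setoid w)) := by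
      rw [hry, Quotient.out_eq]
    obtain ⟨h, hh⟩ := (qmk_eq_iff RA).mp this
    refine ⟨RA.act y h, ?_, ?_⟩
    · show Quotient.mk RA.setoid (RA.act y h) ∈ V
      rw [qmk_act]; exact hqV
    · show 𝒢.rng (RA.act y h) ∈ ({Quotient.out (Quotient.mk RA.setoid w)} : Set Γ)
      rw [RA.rng_act, hh]; exact rfl
  · -- continuity
    intro f hfc hfs
    intro z₀ hz₀
    obtain ⟨w₀, hw₀, rfl⟩ := hQmem z₀ hz₀
    obtain ⟨N, hNc, hNn⟩ := exists_compact_mem_nhds w₀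
    have hCN : IsCompact {x : Γ | 𝒢.rng x ∈ N ∧ Quotient.mk RA.setoid x ∈ tsupport f} :=
      isCompact_sat RA hproper hNc hfs
    obtain ⟨χ, hχc, hχs, hχ1⟩ := exists_bump hCN
    set g : Γ → ℝ := fun x => f (Quotient.mk RA.setoid x) * χ x with hgdef
    have hgc : Continuous g := (hfc.comp (continuous_qmk RA)).mul hχc
    have hgs : HasCompactSupport g := HasCompactSupport.mul_left hχs
    have hFg : ∀ w ∈ 𝒢.unit, w ∈ N →
        ∫ x, f (Quotient.mk RA.setoid x) ∂(lam w) = ∫ x, g x ∂(lam w) := by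
      intro w hw hwN
      refine integral_fiber_congr lam hnull hw fun x hx => ?_
      by_cases hmem : Quotient.mk RA.setoid x ∈ tsupport f
      · have hxC : x ∈ {x : Γ | 𝒢.rng x ∈ N ∧ Quotient.mk RA.setoid x ∈ tsupport f} :=
          ⟨hx ▸ hwN, hmem⟩
        simp only [hgdef, hχ1 hxC, Pi.one_apply, mul_one]
      · simp only [hgdef, image_eq_zero_of_notMem_tsupport hmem, zero_mul]
    have hc := (hcont g hgc hgs) w₀ hw₀
    rw [ContinuousWithinAt] at hc ⊢
    rw [Metric.tendsto_nhds] at hc ⊢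
    intro ε hε
    obtain ⟨U, hUo, hw₀U, hUsub⟩ := mem_nhdsWithin.mp (hc ε hε)
    have hw₀N : w₀ ∈ interior N := mem_interior_iff_mem_nhds.mpr hNn
    rw [eventually_iff, mem_nhdsWithin]
    refine ⟨Quotient.mk RA.setoid '' (U ∩ interior N),
      isOpenMap_qmk RA _ (hUo.inter isOpen_interior), ⟨w₀, ⟨hw₀U, hw₀N⟩, rfl⟩, ?_⟩
    rintro q ⟨⟨x, ⟨hxU, hxN⟩, rfl⟩, hqunit⟩
    obtain ⟨v, hv, hvx⟩ := hQmem _ hqunit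
    have hxu : x ∈ 𝒢.unit := hunit_of_eq hv hvx
    show dist (∫ q, f q ∂(lamQ (Quotient.mk RA.setoid x)))
        (∫ q, f q ∂(lamQ (Quotient.mk RA.setoid w₀))) < ε
    rw [key1 x hxu f hfc hfs, key1 w₀ hw₀ f hfc hfs,
      hFg x hxu (interior_subset hxN), hFg w₀ hw₀ (interior_subset hw₀N)]
    exact hUsub ⟨hxU, hxu⟩
  · -- left invariance
    intro z f hfc hfs
    obtain ⟨x, rfl⟩ := Quotient.exists_rep z
    have hsrc : Q.src (Quotient.mk RA.setoid x) = Quotient.mk RA.setoid (𝒢.src x) := hQsrc x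
    have hrng : Q.rng (Quotient.mk RA.setoid x) = Quotient.mk RA.setoid (𝒢.rng x) := hQrng x
    set u₀ := Quotient.out (Quotient.mk RA.setoid (𝒢.src x)) with hu₀def
    obtain ⟨h₀, hh₀⟩ := hout (𝒢.src x)
    have hu₀ : u₀ ∈ 𝒢.unit := hout_unit _ (𝒢.src_mem x)
    set x' := RA.act x h₀⁻¹ with hx'def
    have hsx' : 𝒢.src x' = u₀ := by
      rw [hx'def, RA.src_act, ← hh₀, RA.act_mul]; simp [RA.act_one]; exact hu₀def.symm
    have hmkx' : Quotient.mk RA.setoid x' = Quotient.mk RA.setoid x := qmk_act RA x h₀⁻¹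
    have hrx' : RA.act (𝒢.rng x') h₀ = 𝒢.rng x := by
      rw [hx'def, ← RA.rng_act, RA.act_mul]; simp [RA.act_one]
    rw [hsrc, hrng]
    set S : Set (Quotient RA.setoid) := {q | Q.rng q = Quotient.mk RA.setoid (𝒢.src x)}
      with hSdef
    have hSc : IsClosed S := by
      have : S = Q.rng ⁻¹' {Quotient.mk RA.setoid (𝒢.src x)} := rfl
      rw [this]
      exact isClosed_singleton.preimage Q.continuous_rng
    have hSm : MeasurableSet S := hSc.measurableSet
    set φ : Quotient RA.setoid → ℝ := fun q => f (Q.mul (Quotient.mk RA.setoid x) q) with hφdef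
    have hφcont : ContinuousOn φ S := by
      have h1 : ContinuousOn (fun q : Quotient RA.setoid =>
          ((Quotient.mk RA.setoid x, q) : Quotient RA.setoid × Quotient RA.setoid)) S :=
        (continuous_const.prodMk continuous_id).continuousOn
      refine hfc.comp_continuousOn (Q.continuous_mul.comp h1 ?_)
      intro q hq
      show Q.src (Quotient.mk RA.setoid x) = Q.rng q
      rw [hsrc, hq]
    have hνS : (lamQ (Quotient.mk RA.setoid (𝒢.src x))) Sᶜ = 0 := by
      have := c2 (𝒢.src x) (𝒢.src_mem x)
      have hcompl : Sᶜ = {q | Q.rng q ≠ Quotient.mk RA.setoid (𝒢.src x)} := rfl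
      rw [hcompl]
      exact this
    have hae : ∀ᵐ q ∂(lamQ (Quotient.mk RA.setoid (𝒢.src x))), q ∈ S := by
      rw [MeasureTheory.ae_iff]
      exact hνS
    have hsm : AEStronglyMeasurable φ (lamQ (Quotient.mk RA.setoid (𝒢.src x))) := by
      have h1 := hφcont.aestronglyMeasurable hSm
        (μ := lamQ (Quotient.mk RA.setoid (𝒢.src x)))
      rwa [Measure.restrict_eq_self_of_ae_mem hae] at h1
    have hmap : lamQ (Quotient.mk RA.setoid (𝒢.src x))
        = (lam u₀).map (Quotient.mk RA.setoid) := rfl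
    rw [show (∫ q, f (Q.mul (Quotient.mk RA.setoid x) q)
        ∂(lamQ (Quotient.mk RA.setoid (𝒢.src x)))) = ∫ q, φ q
        ∂(lamQ (Quotient.mk RA.setoid (𝒢.src x))) from rfl]
    rw [hmap] at hsm ⊢
    rw [MeasureTheory.integral_map hmkm.aemeasurable hsm]
    -- cutoff for multiplication
    have hC : IsCompact {y : Γ | 𝒢.rng y ∈ ({𝒢.rng x'} : Set Γ) ∧
        Quotient.mk RA.setoid y ∈ tsupport f} :=
      isCompact_sat RA hproper isCompact_singleton hfs
    obtain ⟨χ, hχc, hχs, hχ1⟩ := exists_bump hC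
    set g : Γ → ℝ := fun y => f (Quotient.mk RA.setoid y) * χ y with hgdef
    have hgc : Continuous g := (hfc.comp (continuous_qmk RA)).mul hχc
    have hgs : HasCompactSupport g := HasCompactSupport.mul_left hχs
    have key := hinvL x' g hgc hgs
    rw [hsx'] at key
    have hL : ∫ y, φ (Quotient.mk RA.setoid y) ∂(lam u₀)
        = ∫ y, g (𝒢.mul x' y) ∂(lam u₀) := by
      refine integral_fiber_congr lam hnull hu₀ fun y hy => ?_
      have hcomp : 𝒢.src x' = 𝒢.rng y := hsx'.trans hy.symm
      have hφval : φ (Quotient.mk RA.setoid y)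
          = f (Quotient.mk RA.setoid (𝒢.mul x' y)) := by
        show f (Q.mul (Quotient.mk RA.setoid x) (Quotient.mk RA.setoid y)) = _
        rw [← hmkx', hQmul x' y hcomp]
      rw [hφval]
      by_cases hmem : Quotient.mk RA.setoid (𝒢.mul x' y) ∈ tsupport f
      · have hmC : 𝒢.mul x' y ∈ {y : Γ | 𝒢.rng y ∈ ({𝒢.rng x'} : Set Γ) ∧
            Quotient.mk RA.setoid y ∈ tsupport f} := by
          refine ⟨?_, hmem⟩
          rw [𝒢.rng_mul x' y hcomp]; exact rfl
        simp only [hgdef, hχ1 hmC, Pi.one_apply, mul_one]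
      · simp only [hgdef, image_eq_zero_of_notMem_tsupport hmem, zero_mul]
    have hR : ∫ y, g y ∂(lam (𝒢.rng x'))
        = ∫ y, f (Quotient.mk RA.setoid y) ∂(lam (𝒢.rng x')) := by
      refine integral_fiber_congr lam hnull (𝒢.rng_mem x') fun y hy => ?_
      by_cases hmem : Quotient.mk RA.setoid y ∈ tsupport f
      · have hmC : y ∈ {y : Γ | 𝒢.rng y ∈ ({𝒢.rng x'} : Set Γ) ∧
            Quotient.mk RA.setoid y ∈ tsupport f} := ⟨hy, hmem⟩
        simp only [hgdef, hχ1 hmC, Pi.one_apply, mul_one]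
      · simp only [hgdef, image_eq_zero_of_notMem_tsupport hmem, zero_mul]
    have hA : ∫ y, f (Quotient.mk RA.setoid y) ∂(lam (𝒢.rng x'))
        = ∫ y, f (Quotient.mk RA.setoid y) ∂(lam (𝒢.rng x)) :=
      integral_mk_indep RA lam hproper hnull hinvariant (𝒢.rng_mem x') h₀ hrx' f hfc hfs
    have hRHS := key1 (𝒢.rng x) (𝒢.rng_mem x) f hfc hfs
    rw [hL, key, hR, hA, ← hRHS]
end

section
/- Let H be a locally compact Hausdorff topological group acting continuously on the right of a locally compact Hausdorff space Ω, freely (u·h = u implies h = e) and properly (the map Ω × H → Ω × Ω, (u,h) ↦ (u·h, u), is proper). Let u ∈ Ω, and suppose (uᵢ) is a net in Ω and (hᵢ) a net in H, indexed by the same directed set, such that uᵢ → u and uᵢ·hᵢ → u. Then hᵢ → e in H. -/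
open MeasureTheory Filter Topology

/-- If a locally compact group `H` acts freely and properly on a locally
compact Hausdorff space `Ω`, and nets `uᵢ → u`, `uᵢ·hᵢ → u`, then `hᵢ → e`. -/
theorem net_convergence_of_free_proper_action
    {Ω H : Type*} [TopologicalSpace Ω] [T2Space Ω] [LocallyCompactSpace Ω]
    [TopologicalSpace H] [Group H] [IsTopologicalGroup H] [T2Space H] [LocallyCompactSpace H]
    (act : Ω → H → Ω)
    (hcont : Continuous fun p : Ω × H => act p.1 p.2)
    (hone : ∀ u, act u 1 = u)
    (hmul : ∀ u (h k : H), act (act u h) k = act u (h * k))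
    (hfree : ∀ u h, act u h = u → h = 1)
    (hproper : ∀ K : Set (Ω × Ω), IsCompact K →
      IsCompact {p : Ω × H | (act p.1 p.2, p.1) ∈ K})
    {ι : Type*} (l : Filter ι) [l.NeBot] (u : ι → Ω) (h : ι → H) (p : Ω)
    (hu : Filter.Tendsto u l (nhds p))
    (huh : Filter.Tendsto (fun i => act (u i) (h i)) l (nhds p)) :
    Filter.Tendsto h l (nhds (1 : H)) := by
  obtain ⟨K, hKc, hKn⟩ := exists_compact_mem_nhds p
  have hC : IsCompact {q : Ω × H | (act q.1 q.2, q.1) ∈ K ×ˢ K} :=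
    hproper _ (hKc.prod hKc)
  have hS : IsCompact (Prod.snd '' {q : Ω × H | (act q.1 q.2, q.1) ∈ K ×ˢ K}) :=
    hC.image continuous_snd
  have hmem : ∀ᶠ i in l, h i ∈ Prod.snd '' {q : Ω × H | (act q.1 q.2, q.1) ∈ K ×ˢ K} := by
    filter_upwards [hu.eventually (eventually_mem_nhds_iff.mpr
        (mem_of_superset hKn fun x hx => hx)), huh.eventually
        (eventually_mem_nhds_iff.mpr (mem_of_superset hKn fun x hx => hx))] with i h1 h2
    exact ⟨(u i, h i), ⟨mem_of_mem_nhds h2, mem_of_mem_nhds h1⟩, rfl⟩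
  refine hS.tendsto_nhds_of_unique_mapClusterPt hmem fun q _ hq => ?_
  -- q is a cluster point of h along l; show q = 1
  have hF : (l ⊓ Filter.comap h (nhds q)).NeBot := by
    rw [← Filter.map_neBot_iff h, Filter.push_pull]
    rw [inf_comm]
    exact hq
  have hu' : Filter.Tendsto u (l ⊓ Filter.comap h (nhds q)) (nhds p) :=
    hu.mono_left inf_le_left
  have hh' : Filter.Tendsto h (l ⊓ Filter.comap h (nhds q)) (nhds q) :=
    tendsto_comap.mono_left inf_le_right
  have h1 : Filter.Tendsto (fun i => act (u i) (h i)) (l ⊓ Filter.comap h (nhds q))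
      (nhds (act p q)) :=
    (hcont.tendsto (p, q)).comp (hu'.prodMk_nhds hh')
  have h2 : Filter.Tendsto (fun i => act (u i) (h i)) (l ⊓ Filter.comap h (nhds q))
      (nhds p) := huh.mono_left inf_le_left
  exact hfree p q (tendsto_nhds_unique h1 h2)
end
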